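/- arXiv:1110.2716 — 2 statements merged into one kernel-verified Lean document; each statement's English description precedes it below -/
import Mathlib

section
/- If S is a t-signed subset of N, then the ideal J̃^{⟨t⟩}_S generated by the binomials h_{S,i,a,b} is a prime ideal of R = k[x_a : a ∈ N], and so is Q^{⟨t⟩}_S = Var^{⟨t⟩}_S + J̃^{⟨t⟩}_S. -/
open MvPolynomial Finset

/-- The index set `N = [r 1] × ⋯ × [r n]`, realized as dependent functions. -/
abbrev Idx {n : ℕ} (r : Fin n → ℕ) := ∀ i, Fin (r i)

variable {n : ℕ} {r : Fin n → ℕ}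

/-- The switch `s(K,a,b)`: `b i` in the components of `K`, `a i` elsewhere. -/
def sw (K : Finset (Fin n)) (a b : Idx r) : Idx r := fun i => if i ∈ K then b i else a i

/-- The distance `d(a,b) = #{i : a i ≠ b i}`. -/
def hdist (a b : Idx r) : ℕ := (univ.filter fun i => a i ≠ b i).card

/-- The truncated distance `d_t(a,b) = #{i ∈ [t] : a i ≠ b i}`. -/
def hdistT (t : ℕ) (a b : Idx r) : ℕ :=
  (univ.filter fun i : Fin n => (i : ℕ) < t ∧ a i ≠ b i).card

/-- `c : ℕ → N` is a path of length `m` from `a` to `b` inside `S`: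
consecutive elements differ in exactly one component. -/
def IsPath (S : Set (Idx r)) (a b : Idx r) (m : ℕ) (c : ℕ → Idx r) : Prop :=
  c 0 = a ∧ c m = b ∧ (∀ j ≤ m, c j ∈ S) ∧ ∀ j < m, hdist (c j) (c (j + 1)) = 1

/-- `a` and `b` are connected in `S`. -/
def Connected (S : Set (Idx r)) (a b : Idx r) : Prop := ∃ m c, IsPath S a b m c

/-- The minimal path length `pl_S(a,b)`. -/
noncomputable def pl (S : Set (Idx r)) (a b : Idx r) : ℕ :=
  sInf {m | ∃ c, IsPath S a b m c}

/-- `S` is `t`-switchable. -/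
def Switchable (t : ℕ) (S : Set (Idx r)) : Prop :=
  ∀ a ∈ S, ∀ b ∈ S, hdist a b = 2 → ∀ i : Fin n, (i : ℕ) < t →
    sw {i} a b ∈ S ∧ sw {i} b a ∈ S

/-- `S` is `t`-signed: `t`-switchable, and each connectedness class satisfies one of:
constant first `t` coordinates, pairwise distance at most 1, or path-independent
parity of path lengths. -/
def Signed (t : ℕ) (S : Set (Idx r)) : Prop :=
  Switchable t S ∧
  ∀ a ∈ S,
    (∀ b c, Connected S a b → Connected S a c → ∀ i : Fin n, (i : ℕ) < t → b i = c i) ∨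
    (∀ b c, Connected S a b → Connected S a c → hdist b c ≤ 1) ∨
    (∀ b c, Connected S a b → Connected S a c →
      ∀ m m' p p', IsPath S b c m p → IsPath S b c m' p' → m % 2 = m' % 2)

variable (k : Type*) [Field k]

/-- The generalized determinant `f_{i,a,b}`. -/
noncomputable def fdet (i : Fin n) (a b : Idx r) : MvPolynomial (Idx r) k :=
  X a * X b - X (sw {i} a b) * X (sw {i} b a)

/-- The generalized permanent `g_{i,a,b}`. -/
noncomputable def gperm (i : Fin n) (a b : Idx r) : MvPolynomial (Idx r) k :=
  X a * X b + X (sw {i} a b) * X (sw {i} b a)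

/-- The binomial `h_{S,K,a,b}`. -/
noncomputable def hbin (S : Set (Idx r)) (K : Finset (Fin n)) (a b : Idx r) :
    MvPolynomial (Idx r) k :=
  X a * X b - (-1) ^ (K.card * (pl S a b - 1)) * (X (sw K a b) * X (sw K b a))

/-- The slice permanental ideal `J^⟨t⟩`. -/
noncomputable def Jt (t : ℕ) : Ideal (MvPolynomial (Idx r) k) :=
  Ideal.span {p | ∃ (a b : Idx r) (i : Fin n),
    hdist a b = 2 ∧ (i : ℕ) < t ∧ a i ≠ b i ∧ p = gperm k i a b}

/-- The ideal `J̃^⟨t⟩_S`. -/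
noncomputable def Jtilde (t : ℕ) (S : Set (Idx r)) : Ideal (MvPolynomial (Idx r) k) :=
  Ideal.span {p | ∃ (a b : Idx r) (i : Fin n),
    Connected S a b ∧ (i : ℕ) < t ∧ a i ≠ b i ∧ p = hbin k S {i} a b}

/-- The ideal `Var^⟨t⟩_S = (x_a : a ∉ S)`. -/
noncomputable def VarIdeal (S : Set (Idx r)) : Ideal (MvPolynomial (Idx r) k) :=
  Ideal.span {p | ∃ a ∉ S, p = X a}

/-- The ideal `Q^⟨t⟩_S = Var^⟨t⟩_S + J̃^⟨t⟩_S`. -/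
noncomputable def Qideal (t : ℕ) (S : Set (Idx r)) : Ideal (MvPolynomial (Idx r) k) :=
  VarIdeal k S + Jtilde k t S

/-- The ideal `Ĵ^⟨t⟩`. -/
noncomputable def Jhat (t : ℕ) : Ideal (MvPolynomial (Idx r) k) :=
  Ideal.span {p | ∃ (a b : Idx r) (i : Fin n),
    hdist a b = 3 ∧ hdistT t a b = 3 ∧ (i : ℕ) < t ∧ a i ≠ b i ∧ p = gperm k i a b}

/-- `S` is a maximal `t`-signed set. -/
noncomputable def MaximalSigned (t : ℕ) (S : Set (Idx r)) : Prop :=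
  Signed t S ∧ ∀ T : Set (Idx r), Signed t T → S ⊆ T → Qideal k t S ≤ Qideal k t T

section Basics

variable {n : ℕ} {r : Fin n → ℕ} {S : Set (Idx r)} {t : ℕ}

lemma sw_apply (i : Fin n) (a b : Idx r) (l : Fin n) :
    sw {i} a b l = if l = i then b l else a l := by
  simp [sw, Finset.mem_singleton]

lemma hdist_comm (a b : Idx r) : hdist a b = hdist b a := by
  unfold hdist; congr 1; ext i; simp [ne_comm]

lemma hdist_eq_zero_iff {a b : Idx r} : hdist a b = 0 ↔ a = b := by
  simp [hdist, Finset.card_eq_zero, Finset.filter_eq_empty_iff, funext_iff, not_not]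

lemma hdist_exists_of_eq_one {a b : Idx r} (h : hdist a b = 1) :
    ∃ j, a j ≠ b j ∧ ∀ l, l ≠ j → a l = b l := by
  rw [hdist, Finset.card_eq_one] at h
  obtain ⟨j, hj⟩ := h
  have hmem : ∀ i : Fin n, a i ≠ b i ↔ i = j := by
    intro i
    constructor
    · intro hi
      have : i ∈ Finset.univ.filter fun i => a i ≠ b i := by simp [hi]
      rw [hj] at this; simpa using this
    · intro hi
      have h2 : i ∈ Finset.univ.filter fun i => a i ≠ b i := by
        rw [hj, Finset.mem_singleton]; exact hi
      simpa using h2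
  exact ⟨j, (hmem j).2 rfl, fun l hl => not_not.1 fun hne => hl ((hmem l).1 hne)⟩

lemma hdist_eq_one_of {a b : Idx r} (j : Fin n) (h1 : a j ≠ b j)
    (h2 : ∀ l, l ≠ j → a l = b l) : hdist a b = 1 := by
  have : (Finset.univ.filter fun i => a i ≠ b i) = {j} := by
    ext i
    simp only [Finset.mem_filter, Finset.mem_univ, true_and, Finset.mem_singleton]
    constructor
    · intro hi; by_contra hij; exact hi (h2 i hij)
    · rintro rfl; exact h1
  rw [hdist, this, Finset.card_singleton]

lemma hdist_eq_two_of {a b : Idx r} (i j : Fin n) (hij : i ≠ j) (h1 : a i ≠ b i)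
    (h2 : a j ≠ b j) (h3 : ∀ l, l ≠ i → l ≠ j → a l = b l) : hdist a b = 2 := by
  have : (Finset.univ.filter fun l => a l ≠ b l) = {i, j} := by
    ext l
    simp only [Finset.mem_filter, Finset.mem_univ, true_and, Finset.mem_insert,
      Finset.mem_singleton]
    constructor
    · intro hl; by_contra hc; push_neg at hc; exact hl (h3 l hc.1 hc.2)
    · rintro (rfl | rfl) <;> assumption
  rw [hdist, this, Finset.card_pair hij]

lemma IsPath.mem_left {a b : Idx r} {m c} (h : IsPath S a b m c) : a ∈ S := by
  have := h.2.2.1 0 (Nat.zero_le m); rwa [h.1] at this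

lemma IsPath.mem_right {a b : Idx r} {m c} (h : IsPath S a b m c) : b ∈ S := by
  have := h.2.2.1 m le_rfl; rwa [h.2.1] at this

lemma Connected.mem_left {a b : Idx r} (h : Connected S a b) : a ∈ S := by
  obtain ⟨m, c, hc⟩ := h; exact hc.mem_left

lemma Connected.mem_right {a b : Idx r} (h : Connected S a b) : b ∈ S := by
  obtain ⟨m, c, hc⟩ := h; exact hc.mem_right

lemma connected_refl {a : Idx r} (ha : a ∈ S) : Connected S a a :=
  ⟨0, fun _ => a, rfl, rfl, fun _ _ => ha, fun j hj => absurd hj (Nat.not_lt_zero j)⟩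

lemma IsPath.reverse {a b : Idx r} {m c} (h : IsPath S a b m c) :
    IsPath S b a m (fun j => c (m - j)) := by
  obtain ⟨h0, hm, hmem, hstep⟩ := h
  refine ⟨by simpa using hm, by simpa using h0, fun j hj => hmem _ (Nat.sub_le _ _), ?_⟩
  intro j hj
  show hdist (c (m - j)) (c (m - (j + 1))) = 1
  have h1 : m - j = (m - (j+1)) + 1 := by omega
  rw [h1, hdist_comm]
  exact hstep (m - (j+1)) (by omega)

lemma Connected.symm {a b : Idx r} (h : Connected S a b) : Connected S b a := by
  obtain ⟨m, c, hc⟩ := h; exact ⟨m, _, hc.reverse⟩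

lemma IsPath.append {a b d : Idx r} {m m' c c'} (h1 : IsPath S a b m c)
    (h2 : IsPath S b d m' c') :
    IsPath S a d (m + m') (fun j => if j ≤ m then c j else c' (j - m)) := by
  obtain ⟨h10, h1m, h1mem, h1step⟩ := h1
  obtain ⟨h20, h2m, h2mem, h2step⟩ := h2
  refine ⟨by simpa using h10, ?_, ?_, ?_⟩
  · by_cases hm' : m' = 0
    · subst hm'; simpa using h1m.trans (h20.symm.trans h2m)
    · simp only [add_le_iff_nonpos_right, Nat.le_zero, hm', if_neg, Nat.add_sub_cancel_left]
      exact h2m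
  · intro j hj
    by_cases hjm : j ≤ m
    · simpa [hjm] using h1mem j hjm
    · simp only [hjm, if_neg]
      exact h2mem (j - m) (by omega)
  · intro j hj
    rcases lt_trichotomy j m with hlt | rfl | hgt
    · have : j + 1 ≤ m := hlt
      simpa [Nat.le_of_lt hlt, this] using h1step j hlt
    · by_cases h0 : m' = 0
      · omega
      · have : ¬ (j + 1 ≤ j) := by omega
        simp only [le_refl, if_pos, this, if_neg, Nat.add_sub_cancel_left]
        rw [h1m, ← h20]
        exact h2step 0 (by omega)
    · have h1' : ¬ (j ≤ m) := by omega
      have h2' : ¬ (j + 1 ≤ m) := by omega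
      simp only [h1', h2', if_neg]
      have : j + 1 - m = (j - m) + 1 := by omega
      rw [this]
      exact h2step (j - m) (by omega)

lemma Connected.trans {a b d : Idx r} (h1 : Connected S a b) (h2 : Connected S b d) :
    Connected S a d := by
  obtain ⟨m, c, hc⟩ := h1; obtain ⟨m', c', hc'⟩ := h2
  exact ⟨m + m', _, hc.append hc'⟩

lemma pl_le {a b : Idx r} {m c} (h : IsPath S a b m c) : pl S a b ≤ m :=
  Nat.sInf_le ⟨c, h⟩

lemma exists_path_pl {a b : Idx r} (h : Connected S a b) :
    ∃ c, IsPath S a b (pl S a b) c := by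
  obtain ⟨m, c, hc⟩ := h
  exact Nat.sInf_mem (⟨m, c, hc⟩ : Set.Nonempty {m | ∃ c, IsPath S a b m c})

lemma pl_comm (a b : Idx r) : pl S a b = pl S b a := by
  by_cases h : Connected S a b
  · refine le_antisymm ?_ ?_
    · obtain ⟨c, hc⟩ := exists_path_pl h.symm
      exact pl_le hc.reverse
    · obtain ⟨c, hc⟩ := exists_path_pl h
      exact pl_le hc.reverse
  · have e1 : {m | ∃ c, IsPath S a b m c} = ∅ := by
      ext m; simp only [Set.mem_setOf_eq, Set.mem_empty_iff_false, iff_false]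
      rintro ⟨c, hc⟩; exact h ⟨m, c, hc⟩
    have e2 : {m | ∃ c, IsPath S b a m c} = ∅ := by
      ext m; simp only [Set.mem_setOf_eq, Set.mem_empty_iff_false, iff_false]
      rintro ⟨c, hc⟩; exact h ⟨m, _, hc.reverse⟩
    rw [pl, pl, e1, e2]

lemma pl_eq_zero_iff {a b : Idx r} (h : Connected S a b) : pl S a b = 0 ↔ a = b := by
  constructor
  · intro h0
    obtain ⟨c, hc⟩ := exists_path_pl h
    rw [h0] at hc
    rw [← hc.1, ← hc.2.1]
  · rintro rfl
    exact Nat.le_zero.1 (pl_le ⟨rfl, rfl, fun _ _ => h.mem_left,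
      fun j hj => absurd hj (Nat.not_lt_zero j)⟩)

lemma isPath_adj {a b : Idx r} (ha : a ∈ S) (hb : b ∈ S) (hd : hdist a b = 1) :
    IsPath S a b 1 (fun j => if j = 0 then a else b) := by
  refine ⟨by simp, by simp, ?_, ?_⟩
  · intro j hj
    by_cases h0 : j = 0 <;> simp [h0, ha, hb]
  · intro j hj
    have : j = 0 := by omega
    subst this; simpa using hd

lemma connected_adj {a b : Idx r} (ha : a ∈ S) (hb : b ∈ S) (hd : hdist a b = 1) :
    Connected S a b := ⟨1, _, isPath_adj ha hb hd⟩

lemma pl_adj {a b : Idx r} (ha : a ∈ S) (hb : b ∈ S) (hd : hdist a b = 1) :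
    pl S a b = 1 := by
  refine le_antisymm (pl_le (isPath_adj ha hb hd)) ?_
  rcases Nat.eq_zero_or_pos (pl S a b) with h0 | h1
  · exfalso
    have := (pl_eq_zero_iff (connected_adj ha hb hd)).1 h0
    subst this
    simp [hdist_eq_zero_iff.2 rfl] at hd
  · exact h1

/-- one-step extension bound -/
lemma pl_step_le {o a b : Idx r} (h : Connected S o a) (hb : b ∈ S)
    (hd : hdist a b = 1) : pl S o b ≤ pl S o a + 1 := by
  obtain ⟨c, hc⟩ := exists_path_pl h
  exact pl_le (hc.append (isPath_adj h.mem_right hb hd))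

lemma connected_step {o a b : Idx r} (h : Connected S o a) (hb : b ∈ S)
    (hd : hdist a b = 1) : Connected S o b :=
  h.trans (connected_adj h.mem_right hb hd)

/-- predecessor on a geodesic toward `b` -/
lemma exists_pred {a b : Idx r} (h : Connected S a b) {m : ℕ} (hm : pl S a b = m + 1) :
    ∃ a₁, a₁ ∈ S ∧ hdist a a₁ = 1 ∧ Connected S a₁ b ∧ pl S a₁ b = m := by
  obtain ⟨c, hc⟩ := exists_path_pl h
  rw [hm] at hc
  obtain ⟨h0, hlast, hmem, hstep⟩ := hc
  have hpath1 : IsPath S (c 1) b m (fun j => c (j + 1)) := by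
    refine ⟨rfl, by simpa using hlast, fun j hj => hmem (j+1) (by omega), ?_⟩
    intro j hj
    show hdist (c (j + 1)) (c (j + 1 + 1)) = 1
    exact hstep (j+1) (by omega)
  refine ⟨c 1, hmem 1 (by omega), by rw [← h0]; exact hstep 0 (by omega), ?_, ?_⟩
  · exact ⟨m, _, hpath1⟩
  · have hle : pl S (c 1) b ≤ m := pl_le hpath1
    by_contra hne
    have hlt : pl S (c 1) b < m := by omega
    have hc1 : Connected S (c 1) b := ⟨m, _, hpath1⟩
    obtain ⟨c', hc'⟩ := exists_path_pl hc1
    have : Connected S b a := (h.symm)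
    have hpath : IsPath S a b (1 + pl S (c 1) b) _ :=
      (isPath_adj (by rw [← h0]; exact hmem 0 (by omega)) (hmem 1 (by omega))
        (by rw [← h0]; exact hstep 0 (by omega))).append hc'
    have := pl_le hpath
    omega

end Basics
section Switch

variable {n : ℕ} {r : Fin n → ℕ} {S : Set (Idx r)} {t : ℕ}

lemma sw_at (i : Fin n) (a b : Idx r) : sw {i} a b i = b i := by
  rw [sw_apply, if_pos rfl]

lemma sw_ne {i l : Fin n} (h : l ≠ i) (a b : Idx r) : sw {i} a b l = a l := by
  rw [sw_apply, if_neg h]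

lemma hdist_sw_right {a b : Idx r} {i : Fin n} (hne : a i ≠ b i) :
    hdist a (sw {i} a b) = 1 := by
  refine hdist_eq_one_of i (by rw [sw_at]; exact hne) fun l hl => (sw_ne hl a b).symm

/-- Closure lemma: switches of connected pairs stay in `S`. -/
lemma switch_mem (hsw : Switchable t S) :
    ∀ a b : Idx r, Connected S a b → ∀ i : Fin n, (i : ℕ) < t → a i ≠ b i →
      sw {i} a b ∈ S := by
  have main : ∀ m : ℕ, ∀ a b : Idx r, Connected S a b → pl S a b = m →
      ∀ i : Fin n, (i : ℕ) < t → a i ≠ b i → sw {i} a b ∈ S := by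
    intro m
    induction m using Nat.strong_induction_on with
    | _ m IH =>
      intro a b hab hpl i hit hne
      match m, hpl with
      | 0, hpl =>
        exact absurd (congrFun ((pl_eq_zero_iff hab).1 hpl) i) hne
      | m' + 1, hpl =>
        obtain ⟨a₁, ha₁S, hd, hconn, hpl'⟩ := exists_pred hab hpl
        obtain ⟨j, hja, hjeq⟩ := hdist_exists_of_eq_one hd
        by_cases hji : j = i
        · by_cases h2 : a₁ i = b i
          · have e1 : sw {i} a b = a₁ := funext fun l => by
              by_cases hl : l = i
              · rw [hl, sw_at, ← h2]
              · rw [sw_ne hl, hjeq l (by rw [hji]; exact hl)]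
            rw [e1]; exact ha₁S
          · have e1 : sw {i} a b = sw {i} a₁ b := funext fun l => by
              by_cases hl : l = i
              · rw [hl, sw_at, sw_at]
              · rw [sw_ne hl, sw_ne hl, hjeq l (by rw [hji]; exact hl)]
            rw [e1]
            exact IH m' (by omega) a₁ b hconn hpl' i hit h2
        · have hii : a i = a₁ i := hjeq i fun h => hji h.symm
          have hne' : a₁ i ≠ b i := by rw [← hii]; exact hne
          have huS : sw {i} a₁ b ∈ S := IH m' (by omega) a₁ b hconn hpl' i hit hne'
          have hij : i ≠ j := fun h => hji h.symm
          have hd2 : hdist a (sw {i} a₁ b) = 2 := by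
            refine hdist_eq_two_of i j hij ?_ ?_ ?_
            · rw [sw_at]; exact hne
            · rw [sw_ne (fun h => hji h) a₁ b]; exact hja
            · intro l hli hlj
              rw [sw_ne hli a₁ b, hjeq l hlj]
          have hres := (hsw a hab.mem_left (sw {i} a₁ b) huS hd2 i hit).1
          have e1 : sw {i} a (sw {i} a₁ b) = sw {i} a b := funext fun l => by
            by_cases hl : l = i
            · rw [hl, sw_at, sw_at, sw_at]
            · rw [sw_ne hl, sw_ne hl]
          rwa [e1] at hres
  intro a b hab i hit hne
  exact main (pl S a b) a b hab rfl i hit hne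

/-- Key Lemma, `≤` half. -/
lemma switch_pl_le (hsw : Switchable t S) (o : Idx r) :
    ∀ K : ℕ, ∀ a b : Idx r, Connected S o a → Connected S o b →
      pl S o a + pl S o b ≤ K → ∀ i : Fin n, (i : ℕ) < t → a i ≠ b i →
      pl S o (sw {i} a b) + pl S o (sw {i} b a) ≤ pl S o a + pl S o b := by
  intro K
  induction K using Nat.strong_induction_on with
  | _ K IH =>
    have core : ∀ a b : Idx r, Connected S o a → Connected S o b →
        pl S o a + pl S o b ≤ K → ∀ i : Fin n, (i : ℕ) < t → a i ≠ b i →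
        1 ≤ pl S o a →
        pl S o (sw {i} a b) + pl S o (sw {i} b a) ≤ pl S o a + pl S o b := by
      intro a b hoa hob hK i hit hne h1
      obtain ⟨m', hm'⟩ : ∃ m', pl S o a = m' + 1 := ⟨pl S o a - 1, by omega⟩
      have hao : Connected S a o := hoa.symm
      obtain ⟨a₁, ha₁S, hd, hconn, hpl'⟩ := exists_pred hao (by rw [← pl_comm]; exact hm')
      have hoa₁ : Connected S o a₁ := hconn.symm
      have hpla₁ : pl S o a₁ = m' := by rw [pl_comm]; exact hpl'
      have hba : Connected S b a := hob.symm.trans hoa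
      have hab : Connected S a b := hba.symm
      obtain ⟨j, hja, hjeq⟩ := hdist_exists_of_eq_one hd
      by_cases hji : j = i
      · by_cases h2 : a₁ i = b i
        · -- sw {i} a b = a₁
          have e1 : sw {i} a b = a₁ := funext fun l => by
            by_cases hl : l = i
            · rw [hl, sw_at, ← h2]
            · rw [sw_ne hl, hjeq l (by rw [hji]; exact hl)]
          have hs'S : sw {i} b a ∈ S := switch_mem hsw b a hba i hit (Ne.symm hne)
          have hd' : hdist b (sw {i} b a) = 1 := hdist_sw_right (Ne.symm hne)
          have hle : pl S o (sw {i} b a) ≤ pl S o b + 1 := pl_step_le hob hs'S hd'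
          rw [e1, hpla₁]
          omega
        · have ha₁b : a₁ i ≠ b i := h2
          have hIH := IH (m' + pl S o b) (by omega) a₁ b hoa₁ hob
            (by rw [hpla₁]) i hit ha₁b
          rw [hpla₁] at hIH
          have e1 : sw {i} a b = sw {i} a₁ b := funext fun l => by
            by_cases hl : l = i
            · rw [hl, sw_at, sw_at]
            · rw [sw_ne hl, sw_ne hl, hjeq l (by rw [hji]; exact hl)]
          have hba₁ : Connected S b a₁ := hob.symm.trans hoa₁
          have hu'S : sw {i} b a₁ ∈ S := switch_mem hsw b a₁ hba₁ i hit (Ne.symm ha₁b)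
          have hs'S : sw {i} b a ∈ S := switch_mem hsw b a hba i hit (Ne.symm hne)
          have hconnu' : Connected S o (sw {i} b a₁) :=
            connected_step hob hu'S (hdist_sw_right (Ne.symm ha₁b))
          have hd' : hdist (sw {i} b a₁) (sw {i} b a) = 1 := by
            refine hdist_eq_one_of i ?_ ?_
            · rw [sw_at, sw_at]
              intro h; exact hja (by rw [hji]; exact h.symm)
            · intro l hl; rw [sw_ne hl, sw_ne hl]
          have hle : pl S o (sw {i} b a) ≤ pl S o (sw {i} b a₁) + 1 :=
            pl_step_le hconnu' hs'S hd'
          rw [e1]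
          omega
      · have hii : a i = a₁ i := hjeq i fun h => hji h.symm
        have ha₁b : a₁ i ≠ b i := by rw [← hii]; exact hne
        have hIH := IH (m' + pl S o b) (by omega) a₁ b hoa₁ hob
          (by rw [hpla₁]) i hit ha₁b
        rw [hpla₁] at hIH
        have e1 : sw {i} b a₁ = sw {i} b a := funext fun l => by
          by_cases hl : l = i
          · rw [hl, sw_at, sw_at, ← hii]
          · rw [sw_ne hl, sw_ne hl]
        rw [e1] at hIH
        have hab₁ : Connected S a₁ b := hoa₁.symm.trans hob
        have hv'S : sw {i} a₁ b ∈ S := switch_mem hsw a₁ b hab₁ i hit ha₁b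
        have hsS : sw {i} a b ∈ S := switch_mem hsw a b hab i hit hne
        have hconnv' : Connected S o (sw {i} a₁ b) :=
          connected_step hoa₁ hv'S (hdist_sw_right ha₁b)
        have hd' : hdist (sw {i} a₁ b) (sw {i} a b) = 1 := by
          refine hdist_eq_one_of j ?_ ?_
          · rw [sw_ne (fun h => hji h) a₁ b, sw_ne (fun h => hji h) a b]
            exact fun h => hja h.symm
          · intro l hl
            by_cases hli : l = i
            · rw [hli, sw_at, sw_at]
            · rw [sw_ne hli, sw_ne hli, hjeq l hl]
        have hle : pl S o (sw {i} a b) ≤ pl S o (sw {i} a₁ b) + 1 :=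
          pl_step_le hconnv' hsS hd'
        omega
    intro a b hoa hob hK i hit hne
    by_cases h1 : 1 ≤ pl S o a
    · exact core a b hoa hob hK i hit hne h1
    · have h1b : 1 ≤ pl S o b := by
        by_contra hc
        have ha0 : pl S o a = 0 := by omega
        have hb0 : pl S o b = 0 := by omega
        have ea : o = a := (pl_eq_zero_iff hoa).1 ha0
        have eb : o = b := (pl_eq_zero_iff hob).1 hb0
        exact hne (by rw [← ea, ← eb])
      have := core b a hob hoa (by omega) i hit (Ne.symm hne) h1b
      omega

/-- Key Lemma: switching preserves the sum of distances to any base point. -/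
lemma switch_pl_eq (hsw : Switchable t S) {o a b : Idx r}
    (hoa : Connected S o a) (hob : Connected S o b) (i : Fin n)
    (hit : (i : ℕ) < t) (hne : a i ≠ b i) :
    pl S o (sw {i} a b) + pl S o (sw {i} b a) = pl S o a + pl S o b := by
  have hab : Connected S a b := hoa.symm.trans hob
  have hsS : sw {i} a b ∈ S := switch_mem hsw a b hab i hit hne
  have hs'S : sw {i} b a ∈ S := switch_mem hsw b a hab.symm i hit (Ne.symm hne)
  have hos : Connected S o (sw {i} a b) := connected_step hoa hsS (hdist_sw_right hne)
  have hos' : Connected S o (sw {i} b a) :=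
    connected_step hob hs'S (hdist_sw_right (Ne.symm hne))
  have h1 := switch_pl_le hsw o (pl S o a + pl S o b) a b hoa hob le_rfl i hit hne
  have hss' : sw {i} a b i ≠ sw {i} b a i := by
    rw [sw_at, sw_at]; exact Ne.symm hne
  have h2 := switch_pl_le hsw o (pl S o (sw {i} a b) + pl S o (sw {i} b a))
    (sw {i} a b) (sw {i} b a) hos hos' le_rfl i hit hss'
  have e1 : sw {i} (sw {i} a b) (sw {i} b a) = a := funext fun l => by
    by_cases hl : l = i
    · rw [hl, sw_at, sw_at]
    · rw [sw_ne hl, sw_ne hl]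
  have e2 : sw {i} (sw {i} b a) (sw {i} a b) = b := funext fun l => by
    by_cases hl : l = i
    · rw [hl, sw_at, sw_at]
    · rw [sw_ne hl, sw_ne hl]
  rw [e1, e2] at h2
  omega

end Switch
section Sign

variable {n : ℕ} {r : Fin n → ℕ} {S : Set (Idx r)} {t : ℕ}

/-- The connectedness class of `a`. -/
def cls (S : Set (Idx r)) (a : Idx r) : Set (Idx r) := {b | Connected S a b}

lemma cls_eq {a b : Idx r} (h : Connected S a b) : cls S a = cls S b :=
  Set.ext fun x => ⟨fun hx => h.symm.trans hx, fun hx => h.trans hx⟩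

open Classical in
noncomputable def rootOpt (C : Set (Idx r)) : Option (Idx r) :=
  if h : ∃ x, x ∈ C then some h.choose else none

lemma rootOpt_eq_some {C : Set (Idx r)} (h : ∃ x, x ∈ C) :
    rootOpt C = some h.choose := by
  rw [rootOpt, dif_pos h]

/-- A choice of base point in the class of `a`. -/
noncomputable def root (S : Set (Idx r)) (a : Idx r) : Idx r :=
  (rootOpt (cls S a)).getD a

lemma root_eq {a b : Idx r} (h : Connected S a b) : root S a = root S b := by
  have hex : ∃ x, x ∈ cls S b := ⟨b, connected_refl h.mem_right⟩
  unfold root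
  rw [cls_eq h, rootOpt_eq_some hex]
  rfl

lemma root_connected {a : Idx r} (ha : a ∈ S) : Connected S a (root S a) := by
  have hex : ∃ x, x ∈ cls S a := ⟨a, connected_refl ha⟩
  unfold root
  rw [rootOpt_eq_some hex]
  exact hex.choose_spec

/-- The sign exponent. -/
noncomputable def esgn (S : Set (Idx r)) (a : Idx r) : ℕ :=
  Nat.choose (pl S (root S a) a) 2

variable (k : Type*) [Field k]

/-- The sign function. -/
noncomputable def vsgn (S : Set (Idx r)) (a : Idx r) : k := (-1 : k) ^ esgn S a

lemma vsgn_mul_self (S : Set (Idx r)) (a : Idx r) : vsgn k S a * vsgn k S a = 1 := by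
  rw [vsgn, ← pow_add, ← two_mul, pow_mul, neg_one_sq, one_pow]

lemma pl_parity {a₀ : Idx r}
    (par : ∀ b c, Connected S a₀ b → Connected S a₀ c →
      ∀ m m' p p', IsPath S b c m p → IsPath S b c m' p' → m % 2 = m' % 2)
    {o u v : Idx r} (hau : Connected S a₀ u) (hav : Connected S a₀ v)
    (hao : Connected S a₀ o) :
    pl S u v % 2 = (pl S o u + pl S o v) % 2 := by
  have huv : Connected S u v := hau.symm.trans hav
  have hou : Connected S o u := hao.symm.trans hau
  have hov : Connected S o v := hao.symm.trans hav
  obtain ⟨c1, hc1⟩ := exists_path_pl huv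
  obtain ⟨c2, hc2⟩ := exists_path_pl hou
  obtain ⟨c3, hc3⟩ := exists_path_pl hov
  exact par u v hau hav _ _ _ _ hc1 (hc2.reverse.append hc3)

lemma choose_two_succ (m : ℕ) : (m + 1).choose 2 = m.choose 2 + m := by
  rw [Nat.choose_succ_succ, Nat.choose_one_right, Nat.add_comm]

lemma neg_one_pow_congr_mod {K : Type*} [Monoid K] [HasDistribNeg K] {m m' : ℕ}
    (h : m % 2 = m' % 2) : (-1 : K) ^ m = (-1 : K) ^ m' := by
  conv_lhs => rw [← Nat.div_add_mod m 2]
  conv_rhs => rw [← Nat.div_add_mod m' 2]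
  rw [pow_add, pow_add, pow_mul, pow_mul, neg_one_sq, one_pow, one_pow, h]

lemma star_arith (K : Type*) [Monoid K] [HasDistribNeg K] (A B G D P : ℕ)
    (hKL : G + D = A + B) (hG1 : G ≤ A + 1) (hG2 : A ≤ G + 1)
    (hD1 : D ≤ B + 1) (hD2 : B ≤ D + 1)
    (hpG : 1 % 2 = (A + G) % 2) (hpD : 1 % 2 = (B + D) % 2)
    (hP : P % 2 = (A + B) % 2) (hP1 : 1 ≤ P) :
    (-1 : K) ^ A.choose 2 * (-1) ^ B.choose 2 * (-1) ^ (P - 1) =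
      (-1 : K) ^ G.choose 2 * (-1) ^ D.choose 2 := by
  rw [← pow_add, ← pow_add, ← pow_add]
  apply neg_one_pow_congr_mod
  have hcase : (G = A + 1 ∧ B = D + 1) ∨ (A = G + 1 ∧ D = B + 1) := by omega
  rcases hcase with ⟨h1, h2⟩ | ⟨h1, h2⟩ <;>
    simp only [h1, h2, choose_two_succ] <;> omega

/-- The fundamental sign identity (★). -/
lemma star (hS : Signed t S) {a b : Idx r} (hab : Connected S a b) (i : Fin n)
    (hit : (i : ℕ) < t) (hne : a i ≠ b i) :
    vsgn k S a * vsgn k S b * (-1 : k) ^ (pl S a b - 1) =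
      vsgn k S (sw {i} a b) * vsgn k S (sw {i} b a) := by
  obtain ⟨hsw, hcases⟩ := hS
  have ha : a ∈ S := hab.mem_left
  have hb : b ∈ S := hab.mem_right
  have hsS : sw {i} a b ∈ S := switch_mem hsw a b hab i hit hne
  have hs'S : sw {i} b a ∈ S := switch_mem hsw b a hab.symm i hit (Ne.symm hne)
  have hdas : hdist a (sw {i} a b) = 1 := hdist_sw_right hne
  have hdbs' : hdist b (sw {i} b a) = 1 := hdist_sw_right (Ne.symm hne)
  have hcas : Connected S a (sw {i} a b) := connected_adj ha hsS hdas
  have hcbs' : Connected S b (sw {i} b a) := connected_adj hb hs'S hdbs'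
  by_cases hd1 : hdist a b = 1
  · obtain ⟨j, hja, hjeq⟩ := hdist_exists_of_eq_one hd1
    have hji : j = i := by
      by_contra hc
      exact hne (hjeq i fun h => hc h.symm)
    have e1 : sw {i} a b = b := funext fun l => by
      by_cases hl : l = i
      · rw [hl, sw_at]
      · rw [sw_ne hl, hjeq l (by rw [hji]; exact hl)]
    have e2 : sw {i} b a = a := funext fun l => by
      by_cases hl : l = i
      · rw [hl, sw_at]
      · rw [sw_ne hl, (hjeq l (by rw [hji]; exact hl)).symm]
    rw [e1, e2, pl_adj ha hb hd1]
    ring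
  · have hne' : a ≠ b := fun h => hne (congrFun h i)
    have par : ∀ b' c, Connected S a b' → Connected S a c →
        ∀ m m' p p', IsPath S b' c m p → IsPath S b' c m' p' → m % 2 = m' % 2 := by
      rcases hcases a ha with h1 | h2 | h3
      · exact absurd (h1 a b (connected_refl ha) hab i hit) hne
      · have hle := h2 a b (connected_refl ha) hab
        have : hdist a b ≠ 0 := fun h => hne' (hdist_eq_zero_iff.1 h)
        omega
      · exact h3
    have hao : Connected S a (root S a) := root_connected ha
    have hoa : Connected S (root S a) a := hao.symm
    have hob : Connected S (root S a) b := hao.symm.trans hab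
    have hos : Connected S (root S a) (sw {i} a b) := hao.symm.trans hcas
    have hos' : Connected S (root S a) (sw {i} b a) := hao.symm.trans (hab.trans hcbs')
    have hrb : root S b = root S a := (root_eq hab).symm
    have hrs : root S (sw {i} a b) = root S a := (root_eq hcas).symm
    have hrs' : root S (sw {i} b a) = root S a := (root_eq (hab.trans hcbs')).symm
    have hKL : pl S (root S a) (sw {i} a b) + pl S (root S a) (sw {i} b a) =
        pl S (root S a) a + pl S (root S a) b := switch_pl_eq hsw hoa hob i hit hne
    have hG1 : pl S (root S a) (sw {i} a b) ≤ pl S (root S a) a + 1 :=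
      pl_step_le hoa hsS hdas
    have hG2 : pl S (root S a) a ≤ pl S (root S a) (sw {i} a b) + 1 :=
      pl_step_le hos ha (by rw [hdist_comm]; exact hdas)
    have hD1 : pl S (root S a) (sw {i} b a) ≤ pl S (root S a) b + 1 :=
      pl_step_le hob hs'S hdbs'
    have hD2 : pl S (root S a) b ≤ pl S (root S a) (sw {i} b a) + 1 :=
      pl_step_le hos' hb (by rw [hdist_comm]; exact hdbs')
    have hparG : 1 % 2 = (pl S (root S a) a + pl S (root S a) (sw {i} a b)) % 2 := by
      have := pl_parity par (connected_refl ha) hcas hao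
      rwa [pl_adj ha hsS hdas] at this
    have hparD : 1 % 2 = (pl S (root S a) b + pl S (root S a) (sw {i} b a)) % 2 := by
      have := pl_parity par hab (hab.trans hcbs') hao
      rwa [pl_adj hb hs'S hdbs'] at this
    have hparAB : pl S a b % 2 = (pl S (root S a) a + pl S (root S a) b) % 2 :=
      pl_parity par (connected_refl ha) hab hao
    have hpl1 : 1 ≤ pl S a b := by
      rcases Nat.eq_zero_or_pos (pl S a b) with h0 | h
      · exact absurd ((pl_eq_zero_iff hab).1 h0) hne'
      · exact h
    have ea : vsgn k S a = (-1 : k) ^ (pl S (root S a) a).choose 2 := rfl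
    have eb : vsgn k S b = (-1 : k) ^ (pl S (root S b) b).choose 2 := rfl
    have es : vsgn k S (sw {i} a b) =
        (-1 : k) ^ (pl S (root S (sw {i} a b)) (sw {i} a b)).choose 2 := rfl
    have es' : vsgn k S (sw {i} b a) =
        (-1 : k) ^ (pl S (root S (sw {i} b a)) (sw {i} b a)).choose 2 := rfl
    rw [ea, eb, es, es', hrb, hrs, hrs']
    exact star_arith k _ _ _ _ _ hKL hG1 hG2 hD1 hD2 hparG hparD hparAB hpl1

end Sign
section Weight
open Classical

variable {n : ℕ} {r : Fin n → ℕ}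

/-- Variable type for the target polynomial ring. -/
abbrev WVar (r : Fin n → ℕ) : Type _ :=
  (Idx r) ⊕ ((Fin n × ℕ × Set (Idx r)) ⊕ ((Fin n → Option ℕ) × Set (Idx r)))

/-- The tail of `a` (coordinates `≥ t`), recorded ℕ-valued. -/
def tailOf (t : ℕ) (a : Idx r) : Fin n → Option ℕ :=
  fun i => if t ≤ (i : ℕ) then some ((a i : ℕ)) else none

lemma tailOf_eq_of {t : ℕ} {a b : Idx r} (h : ∀ i : Fin n, ¬ ((i : ℕ) < t) → a i = b i) :
    tailOf t a = tailOf t b := by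
  funext i
  unfold tailOf
  by_cases hi : t ≤ (i : ℕ)
  · rw [if_pos hi, if_pos hi, h i (by omega)]
  · rw [if_neg hi, if_neg hi]

lemma tailOf_apply_eq {t : ℕ} {a b : Idx r} (h : tailOf t a = tailOf t b)
    (i : Fin n) (hi : t ≤ (i : ℕ)) : a i = b i := by
  have := congrFun h i
  unfold tailOf at this
  rw [if_pos hi, if_pos hi] at this
  exact Fin.val_injective (Option.some_injective ℕ this)

variable (t : ℕ) (S : Set (Idx r))

/-- Weight of a point: the exponent vector of its image monomial. -/
noncomputable def wfn (a : Idx r) : WVar r →₀ ℕ :=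
  if a ∈ S then
    Finsupp.single (Sum.inr (Sum.inr (tailOf t a, cls S a))) 1
      + ∑ i ∈ Finset.univ.filter (fun i : Fin n => (i : ℕ) < t),
          Finsupp.single (Sum.inr (Sum.inl (i, (a i : ℕ), cls S a))) 1
  else Finsupp.single (Sum.inl a) 1

variable {t S}

lemma wfn_apply_inl {x : Idx r} (c : Idx r) :
    wfn t S x (Sum.inl c) = if x ∉ S ∧ x = c then 1 else 0 := by
  unfold wfn
  by_cases hx : x ∈ S
  · rw [if_pos hx]
    rw [Finsupp.add_apply, Finsupp.single_apply, if_neg (by simp),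
      Finsupp.finset_sum_apply]
    simp [Finsupp.single_apply, hx]
  · rw [if_neg hx, Finsupp.single_apply]
    by_cases hc : x = c
    · subst hc; simp [hx]
    · simp [hx, hc, fun h : (Sum.inl x : WVar r) = Sum.inl c => hc (Sum.inl.inj h)]

lemma wfn_apply_tail {x : Idx r} (hx : x ∈ S) (τ : Fin n → Option ℕ) (C : Set (Idx r)) :
    wfn t S x (Sum.inr (Sum.inr (τ, C))) =
      if tailOf t x = τ ∧ cls S x = C then 1 else 0 := by
  unfold wfn
  rw [if_pos hx, Finsupp.add_apply, Finsupp.finset_sum_apply]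
  have h2 : ∑ i ∈ Finset.univ.filter (fun i : Fin n => (i : ℕ) < t),
      (Finsupp.single (Sum.inr (Sum.inl (i, (x i : ℕ), cls S x)) : WVar r) 1)
        (Sum.inr (Sum.inr (τ, C))) = 0 := by
    apply Finset.sum_eq_zero
    intro i _
    rw [Finsupp.single_apply, if_neg (by simp)]
  rw [h2, add_zero, Finsupp.single_apply]
  by_cases h : tailOf t x = τ ∧ cls S x = C
  · rw [if_pos, if_pos h]
    rw [h.1, h.2]
  · rw [if_neg, if_neg h]
    intro hc
    apply h
    obtain ⟨h1, h2⟩ := Prod.mk.injEq .. ▸ (Sum.inr.inj (Sum.inr.inj hc))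
    exact ⟨h1, h2⟩

lemma wfn_apply_slice {x : Idx r} (hx : x ∈ S) (i : Fin n) (v : ℕ) (C : Set (Idx r)) :
    wfn t S x (Sum.inr (Sum.inl (i, v, C))) =
      if (i : ℕ) < t ∧ (x i : ℕ) = v ∧ cls S x = C then 1 else 0 := by
  unfold wfn
  rw [if_pos hx, Finsupp.add_apply, Finsupp.single_apply, if_neg (by simp),
    Finsupp.finset_sum_apply, zero_add]
  by_cases h : (i : ℕ) < t ∧ (x i : ℕ) = v ∧ cls S x = C
  · rw [Finset.sum_eq_single i]
    · rw [Finsupp.single_apply, if_pos, if_pos h]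
      rw [h.2.1, h.2.2]
    · intro j hj hji
      rw [Finsupp.single_apply, if_neg]
      intro hc
      have := (Prod.mk.injEq .. ▸ (Sum.inl.inj (Sum.inr.inj hc))).1
      exact hji this
    · intro hi
      exact absurd (by simp [h.1]) hi
  · rw [if_neg h]
    apply Finset.sum_eq_zero
    intro j hj
    rw [Finsupp.single_apply, if_neg]
    intro hc
    obtain ⟨hj1, hj2⟩ := Prod.mk.injEq .. ▸ (Sum.inl.inj (Sum.inr.inj hc))
    obtain ⟨hj3, hj4⟩ := Prod.mk.injEq .. ▸ hj2
    apply h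
    subst hj1
    exact ⟨by simpa using hj, hj3, hj4⟩

/-- The invariant of a multiset of points. -/
noncomputable def Imap (t : ℕ) (S : Set (Idx r)) (A : Multiset (Idx r)) : WVar r →₀ ℕ :=
  (A.map (wfn t S)).sum

lemma Imap_apply (A : Multiset (Idx r)) (γ : WVar r) :
    Imap t S A γ = (A.map (fun x => wfn t S x γ)).sum := by
  unfold Imap
  have := map_multiset_sum (Finsupp.applyAddHom γ) (A.map (wfn t S))
  simp only [Finsupp.applyAddHom_apply] at this
  rw [this, Multiset.map_map]
  rfl

lemma Imap_cons (a : Idx r) (A : Multiset (Idx r)) :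
    Imap t S (a ::ₘ A) = wfn t S a + Imap t S A := by
  unfold Imap
  rw [Multiset.map_cons, Multiset.sum_cons]

lemma exists_of_Imap_pos {A : Multiset (Idx r)} {γ : WVar r} (h : 0 < Imap t S A γ) :
    ∃ x ∈ A, 0 < wfn t S x γ := by
  by_contra hc
  push_neg at hc
  rw [Imap_apply] at h
  have : ((A.map (fun x => wfn t S x γ))).sum = 0 := by
    apply Multiset.sum_eq_zero
    intro y hy
    obtain ⟨x, hx, rfl⟩ := Multiset.mem_map.1 hy
    exact Nat.le_zero.1 (hc x hx)
  omega

lemma Imap_pos_of_mem {A : Multiset (Idx r)} {x : Idx r} (hx : x ∈ A) {γ : WVar r}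
    (h : 0 < wfn t S x γ) : 0 < Imap t S A γ := by
  rw [Imap_apply]
  have hle : wfn t S x γ ≤ (A.map (fun y => wfn t S y γ)).sum :=
    Multiset.single_le_sum (fun y _ => Nat.zero_le y) _
      (Multiset.mem_map_of_mem _ hx)
  omega

lemma finsupp_add_left_cancel {W : Type*} {u v w : W →₀ ℕ} (h : u + v = u + w) : v = w := by
  ext x
  have := congrArg (fun f : W →₀ ℕ => f x) h
  simp only [Finsupp.add_apply] at this
  omega

end Weight
section Straighten

open Classical

variable {n : ℕ} {r : Fin n → ℕ} {S : Set (Idx r)} {t : ℕ}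

lemma connected_of_cls_eq {a b : Idx r} (hb : b ∈ S) (h : cls S a = cls S b) :
    Connected S a b := by
  have : b ∈ cls S b := connected_refl hb
  rw [← h] at this
  exact this

lemma wfn_switch (hsw : Switchable t S) {b₀ b₁ : Idx r} (hc : Connected S b₀ b₁)
    (i : Fin n) (hit : (i : ℕ) < t) (hne : b₀ i ≠ b₁ i) :
    wfn t S (sw {i} b₀ b₁) + wfn t S (sw {i} b₁ b₀) = wfn t S b₀ + wfn t S b₁ := by
  have hb₀ : b₀ ∈ S := hc.mem_left
  have hb₁ : b₁ ∈ S := hc.mem_right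
  have hs : sw {i} b₀ b₁ ∈ S := switch_mem hsw b₀ b₁ hc i hit hne
  have hs' : sw {i} b₁ b₀ ∈ S := switch_mem hsw b₁ b₀ hc.symm i hit (Ne.symm hne)
  have hcls_s : cls S (sw {i} b₀ b₁) = cls S b₀ :=
    (cls_eq (connected_adj hb₀ hs (hdist_sw_right hne))).symm
  have hcls_s' : cls S (sw {i} b₁ b₀) = cls S b₁ :=
    (cls_eq (connected_adj hb₁ hs' (hdist_sw_right (Ne.symm hne)))).symm
  have hcls01 : cls S b₁ = cls S b₀ := (cls_eq hc).symm
  have htail_s : tailOf t (sw {i} b₀ b₁) = tailOf t b₀ :=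
    tailOf_eq_of fun j hj => sw_ne (by rintro rfl; exact hj hit) b₀ b₁
  have htail_s' : tailOf t (sw {i} b₁ b₀) = tailOf t b₁ :=
    tailOf_eq_of fun j hj => sw_ne (by rintro rfl; exact hj hit) b₁ b₀
  unfold wfn
  rw [if_pos hs, if_pos hs', if_pos hb₀, if_pos hb₁,
    hcls_s, hcls_s', hcls01, htail_s, htail_s']
  have hsum : (∑ j ∈ Finset.univ.filter (fun j : Fin n => (j : ℕ) < t),
        (Finsupp.single (Sum.inr (Sum.inl (j, ((sw {i} b₀ b₁) j : ℕ), cls S b₀))) 1 : WVar r →₀ ℕ))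
      + (∑ j ∈ Finset.univ.filter (fun j : Fin n => (j : ℕ) < t),
        (Finsupp.single (Sum.inr (Sum.inl (j, ((sw {i} b₁ b₀) j : ℕ), cls S b₀))) 1 : WVar r →₀ ℕ))
      = (∑ j ∈ Finset.univ.filter (fun j : Fin n => (j : ℕ) < t),
        (Finsupp.single (Sum.inr (Sum.inl (j, (b₀ j : ℕ), cls S b₀))) 1 : WVar r →₀ ℕ))
      + (∑ j ∈ Finset.univ.filter (fun j : Fin n => (j : ℕ) < t),
        (Finsupp.single (Sum.inr (Sum.inl (j, (b₁ j : ℕ), cls S b₀))) 1 : WVar r →₀ ℕ)) := by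
    rw [← Finset.sum_add_distrib, ← Finset.sum_add_distrib]
    apply Finset.sum_congr rfl
    intro j _
    by_cases hji : j = i
    · subst hji
      rw [sw_at, sw_at, add_comm]
    · rw [sw_ne hji, sw_ne hji]
  rw [add_add_add_comm, hsum, add_add_add_comm]

variable (k : Type*) [Field k]

/-- product of variables of a multiset -/
noncomputable def Pprod (A : Multiset (Idx r)) : MvPolynomial (Idx r) k :=
  (A.map X).prod

/-- product of signs of a multiset -/
noncomputable def Eprod (S : Set (Idx r)) (A : Multiset (Idx r)) : k :=
  (A.map (vsgn k S)).prod

@[simp] lemma Pprod_zero : Pprod k (0 : Multiset (Idx r)) = 1 := rfl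

@[simp] lemma Pprod_cons (a : Idx r) (A : Multiset (Idx r)) :
    Pprod k (a ::ₘ A) = X a * Pprod k A := by
  unfold Pprod; rw [Multiset.map_cons, Multiset.prod_cons]

@[simp] lemma Eprod_zero : Eprod k S (0 : Multiset (Idx r)) = 1 := rfl

@[simp] lemma Eprod_cons (a : Idx r) (A : Multiset (Idx r)) :
    Eprod k S (a ::ₘ A) = vsgn k S a * Eprod k S A := by
  unfold Eprod; rw [Multiset.map_cons, Multiset.prod_cons]

/-- The core straightening lemma. -/
lemma straighten_core (hS : Signed t S) :
    ∀ N : ℕ, ∀ A B : Multiset (Idx r), A.card ≤ N →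
    (∀ x ∈ A, x ∈ S) → (∀ x ∈ B, x ∈ S) → Imap t S A = Imap t S B →
    C (Eprod k S A) * Pprod k A - C (Eprod k S B) * Pprod k B ∈ Jtilde k t S := by
  obtain ⟨hsw, hcases⟩ := id hS
  have hBzero : ∀ B : Multiset (Idx r), (∀ x ∈ B, x ∈ S) →
      Imap t S B = 0 → B = 0 := by
    intro B hBS h0
    by_contra hB
    obtain ⟨b, hb⟩ := Multiset.exists_mem_of_ne_zero hB
    have hbS := hBS b hb
    have hpos : 0 < wfn t S b (Sum.inr (Sum.inr (tailOf t b, cls S b))) := by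
      rw [wfn_apply_tail hbS, if_pos ⟨rfl, rfl⟩]; omega
    have := Imap_pos_of_mem hb hpos
    rw [h0] at this
    simp at this
  intro N
  induction N with
  | zero =>
    intro A B hcard hAS hBS hI
    have hA0 : A = 0 := Multiset.card_eq_zero.1 (Nat.le_zero.1 hcard)
    subst hA0
    have hB0 : B = 0 := hBzero B hBS (by rw [← hI]; rfl)
    subst hB0
    simp only [sub_self]
    exact Submodule.zero_mem _
  | succ N IHout =>
    intro A B hcard hAS hBS hI
    by_cases hA0 : A = 0
    · subst hA0
      have hB0 : B = 0 := hBzero B hBS (by rw [← hI]; rfl)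
      subst hB0
      simp only [sub_self]
      exact Submodule.zero_mem _
    obtain ⟨a, ha⟩ := Multiset.exists_mem_of_ne_zero hA0
    have haS : a ∈ S := hAS a ha
    obtain ⟨A', hA'⟩ : ∃ A', A = a ::ₘ A' := ⟨A.erase a, (Multiset.cons_erase ha).symm⟩
    subst hA'
    -- inner induction on the number of slice-disagreements of the matched element
    have inner : ∀ m : ℕ, ∀ B : Multiset (Idx r), ∀ b₀ : Idx r, b₀ ∈ B →
        (∀ x ∈ B, x ∈ S) → Imap t S (a ::ₘ A') = Imap t S B →
        tailOf t b₀ = tailOf t a → cls S b₀ = cls S a →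
        (Finset.univ.filter fun i : Fin n => (i : ℕ) < t ∧ b₀ i ≠ a i).card ≤ m →
        C (Eprod k S (a ::ₘ A')) * Pprod k (a ::ₘ A') -
          C (Eprod k S B) * Pprod k B ∈ Jtilde k t S := by
      intro m
      induction m with
      | zero =>
        intro B b₀ hb₀ hBS hI htail hclsb hcard0
        have hb₀a : b₀ = a := by
          funext i
          by_cases hit : (i : ℕ) < t
          · by_contra hne
            have : i ∈ Finset.univ.filter
                fun i : Fin n => (i : ℕ) < t ∧ b₀ i ≠ a i := by
              simp [hit, hne]
            have hpos : 0 < (Finset.univ.filter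
                fun i : Fin n => (i : ℕ) < t ∧ b₀ i ≠ a i).card :=
              Finset.card_pos.2 ⟨i, this⟩
            omega
          · exact tailOf_apply_eq htail i (by omega)
        subst hb₀a
        obtain ⟨B', hB'⟩ : ∃ B', B = b₀ ::ₘ B' := ⟨B.erase b₀, (Multiset.cons_erase hb₀).symm⟩
        subst hB'
        rw [Imap_cons, Imap_cons] at hI
        have hI' : Imap t S A' = Imap t S B' := finsupp_add_left_cancel hI
        have hJ := IHout A' B' (by
            have := Multiset.card_cons b₀ A'
            omega)
          (fun x hx => hAS x (Multiset.mem_cons_of_mem hx))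
          (fun x hx => hBS x (Multiset.mem_cons_of_mem hx)) hI'
        have hkey : C (Eprod k S (b₀ ::ₘ A')) * Pprod k (b₀ ::ₘ A') -
            C (Eprod k S (b₀ ::ₘ B')) * Pprod k (b₀ ::ₘ B') =
            (C (vsgn k S b₀) * X b₀) *
              (C (Eprod k S A') * Pprod k A' - C (Eprod k S B') * Pprod k B') := by
          simp only [Eprod_cons, Pprod_cons, map_mul]
          ring
        rw [hkey]
        exact Ideal.mul_mem_left _ _ hJ
      | succ m IHm =>
        intro B b₀ hb₀ hBS hI htail hclsb hcard1
        by_cases hle : (Finset.univ.filter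
            fun i : Fin n => (i : ℕ) < t ∧ b₀ i ≠ a i).card ≤ m
        · exact IHm B b₀ hb₀ hBS hI htail hclsb hle
        have hpos : 0 < (Finset.univ.filter
            fun i : Fin n => (i : ℕ) < t ∧ b₀ i ≠ a i).card := by omega
        obtain ⟨i, hi⟩ := Finset.card_pos.1 hpos
        rw [Finset.mem_filter] at hi
        obtain ⟨-, hit, hne_ia⟩ := hi
        -- find the witness b₁ with b₁ i = a i
        have hwA : 0 < wfn t S a (Sum.inr (Sum.inl (i, (a i : ℕ), cls S a))) := by
          rw [wfn_apply_slice haS, if_pos ⟨hit, rfl, rfl⟩]; omega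
        have hIpos : 0 < Imap t S B (Sum.inr (Sum.inl (i, (a i : ℕ), cls S a))) := by
          rw [← hI]
          exact Imap_pos_of_mem (Multiset.mem_cons_self a A') hwA
        obtain ⟨b₁, hb₁B, hb₁pos⟩ := exists_of_Imap_pos hIpos
        have hb₁S : b₁ ∈ S := hBS b₁ hb₁B
        rw [wfn_apply_slice hb₁S] at hb₁pos
        have hcond : (i : ℕ) < t ∧ (b₁ i : ℕ) = (a i : ℕ) ∧ cls S b₁ = cls S a := by
          by_contra hc
          rw [if_neg hc] at hb₁pos
          omega
        have hb₁i : b₁ i = a i := Fin.val_injective hcond.2.1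
        have hcls1 : cls S b₁ = cls S a := hcond.2.2
        have hb₁ne : b₁ ≠ b₀ := fun h => hne_ia (by rw [← h]; exact hb₁i)
        have hb₁mem' : b₁ ∈ B.erase b₀ := (Multiset.mem_erase_of_ne hb₁ne).2 hb₁B
        have hB : b₀ ::ₘ b₁ ::ₘ (B.erase b₀).erase b₁ = B := by
          rw [Multiset.cons_erase hb₁mem', Multiset.cons_erase hb₀]
        set B'' := (B.erase b₀).erase b₁ with hB''
        have hne01 : b₀ i ≠ b₁ i := by rw [hb₁i]; exact hne_ia
        have hconn01 : Connected S b₀ b₁ :=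
          connected_of_cls_eq hb₁S (by rw [hclsb, hcls1])
        have hb₀S : b₀ ∈ S := hBS b₀ hb₀
        have hsS : sw {i} b₀ b₁ ∈ S := switch_mem hsw b₀ b₁ hconn01 i hit hne01
        have hs'S : sw {i} b₁ b₀ ∈ S :=
          switch_mem hsw b₁ b₀ hconn01.symm i hit (Ne.symm hne01)
        have hcls_s : cls S (sw {i} b₀ b₁) = cls S a := by
          rw [← hclsb]
          exact (cls_eq (connected_adj hb₀S hsS (hdist_sw_right hne01))).symm
        have htail_s : tailOf t (sw {i} b₀ b₁) = tailOf t a := by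
          rw [← htail]
          exact tailOf_eq_of fun j hj => sw_ne (by rintro rfl; exact hj hit) b₀ b₁
        set B₂ := sw {i} b₀ b₁ ::ₘ sw {i} b₁ b₀ ::ₘ B'' with hB₂
        have hB₂S : ∀ x ∈ B₂, x ∈ S := by
          intro x hx
          rw [hB₂, Multiset.mem_cons, Multiset.mem_cons] at hx
          rcases hx with rfl | rfl | hx
          · exact hsS
          · exact hs'S
          · exact hBS x (Multiset.mem_of_mem_erase (Multiset.mem_of_mem_erase hx))
        have hIB₂ : Imap t S (a ::ₘ A') = Imap t S B₂ := by
          rw [hI, ← hB, hB₂, Imap_cons, Imap_cons, Imap_cons, Imap_cons,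
            ← add_assoc, ← add_assoc, wfn_switch hsw hconn01 i hit hne01]
        have hfil : (Finset.univ.filter
            fun i' : Fin n => (i' : ℕ) < t ∧ (sw {i} b₀ b₁) i' ≠ a i') =
            (Finset.univ.filter
              fun i' : Fin n => (i' : ℕ) < t ∧ b₀ i' ≠ a i').erase i := by
          ext i'
          simp only [Finset.mem_erase, Finset.mem_filter, Finset.mem_univ, true_and]
          constructor
          · rintro ⟨h1, h2⟩
            have hii' : i' ≠ i := by
              rintro rfl
              rw [sw_at] at h2
              exact h2 hb₁i
            rw [sw_ne hii'] at h2
            exact ⟨hii', h1, h2⟩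
          · rintro ⟨hii', h1, h2⟩
            rw [sw_ne hii']
            exact ⟨h1, h2⟩
        have hcard_s : (Finset.univ.filter
            fun i' : Fin n => (i' : ℕ) < t ∧ (sw {i} b₀ b₁) i' ≠ a i').card ≤ m := by
          rw [hfil, Finset.card_erase_of_mem (by simp [hit, hne_ia])]
          omega
        have hIH2 := IHm B₂ (sw {i} b₀ b₁) (Multiset.mem_cons_self _ _) hB₂S hIB₂
          htail_s hcls_s hcard_s
        -- the move: relate B and B₂ modulo the ideal
        have hgmem : hbin k S {i} b₀ b₁ ∈ Jtilde k t S :=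
          Ideal.subset_span ⟨b₀, b₁, i, hconn01, hit, hne01, rfl⟩
        have hstar' : (C (vsgn k S b₀) : MvPolynomial (Idx r) k) * C (vsgn k S b₁) *
            C ((-1 : k) ^ (pl S b₀ b₁ - 1)) =
            C (vsgn k S (sw {i} b₀ b₁)) * C (vsgn k S (sw {i} b₁ b₀)) := by
          simp only [← map_mul]
          rw [star k hS hconn01 i hit hne01]
        have hneg : ((-1 : MvPolynomial (Idx r) k)) ^ (pl S b₀ b₁ - 1) =
            C ((-1 : k) ^ (pl S b₀ b₁ - 1)) := by
          rw [map_pow, map_neg, map_one]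
        have hkey : C (Eprod k S B) * Pprod k B - C (Eprod k S B₂) * Pprod k B₂ =
            (C (Eprod k S B'') * C (vsgn k S b₀) * C (vsgn k S b₁) * Pprod k B'') *
              hbin k S {i} b₀ b₁ := by
          rw [← hB, hB₂]
          simp only [Eprod_cons, Pprod_cons, map_mul, hbin, Finset.card_singleton,
            one_mul, hneg]
          linear_combination (C (Eprod k S B'') * Pprod k B'' *
            (X (sw {i} b₀ b₁) * X (sw {i} b₁ b₀))) * hstar'
        have hmove : C (Eprod k S B) * Pprod k B - C (Eprod k S B₂) * Pprod k B₂ ∈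
            Jtilde k t S := by
          rw [hkey]
          exact Ideal.mul_mem_left _ _ hgmem
        have hfinal : C (Eprod k S (a ::ₘ A')) * Pprod k (a ::ₘ A') -
            C (Eprod k S B) * Pprod k B =
            (C (Eprod k S (a ::ₘ A')) * Pprod k (a ::ₘ A') -
              C (Eprod k S B₂) * Pprod k B₂) -
            (C (Eprod k S B) * Pprod k B - C (Eprod k S B₂) * Pprod k B₂) := by
          ring
        rw [hfinal]
        exact Submodule.sub_mem _ hIH2 hmove
    -- find b₀ in B matching a's tail and class
    have hwA : 0 < wfn t S a (Sum.inr (Sum.inr (tailOf t a, cls S a))) := by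
      rw [wfn_apply_tail haS, if_pos ⟨rfl, rfl⟩]; omega
    have hIpos : 0 < Imap t S B (Sum.inr (Sum.inr (tailOf t a, cls S a))) := by
      rw [← hI]
      exact Imap_pos_of_mem (Multiset.mem_cons_self a A') hwA
    obtain ⟨b₀, hb₀B, hb₀pos⟩ := exists_of_Imap_pos hIpos
    have hb₀S : b₀ ∈ S := hBS b₀ hb₀B
    rw [wfn_apply_tail hb₀S] at hb₀pos
    have hcond : tailOf t b₀ = tailOf t a ∧ cls S b₀ = cls S a := by
      by_contra hc
      rw [if_neg hc] at hb₀pos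
      omega
    exact inner _ B b₀ hb₀B hBS hI hcond.1 hcond.2 le_rfl

end Straighten
section Maps

open Classical

variable {n : ℕ} {r : Fin n → ℕ} {S : Set (Idx r)} {t : ℕ}
variable (k : Type*) [Field k]

lemma Eprod_sq (A : Multiset (Idx r)) : Eprod k S A * Eprod k S A = 1 := by
  induction A using Multiset.induction with
  | empty => simp
  | cons a A ih =>
    rw [Eprod_cons]
    calc vsgn k S a * Eprod k S A * (vsgn k S a * Eprod k S A)
        = (vsgn k S a * vsgn k S a) * (Eprod k S A * Eprod k S A) := by ring
      _ = 1 := by rw [vsgn_mul_self, ih, one_mul]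

/-- The monomial map whose kernel is `J̃`. -/
noncomputable def phimap (t : ℕ) (S : Set (Idx r)) :
    MvPolynomial (Idx r) k →ₐ[k] MvPolynomial (WVar r) k :=
  aeval fun a => C (vsgn k S a) * monomial (wfn t S a) 1

/-- The monomial map whose kernel is `Q`. -/
noncomputable def psimap (t : ℕ) (S : Set (Idx r)) :
    MvPolynomial (Idx r) k →ₐ[k] MvPolynomial (WVar r) k :=
  aeval fun a => if a ∈ S then C (vsgn k S a) * monomial (wfn t S a) 1 else 0

@[simp] lemma Imap_zero : Imap t S (0 : Multiset (Idx r)) = 0 := by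
  simp [Imap]

lemma phimap_Pprod (A : Multiset (Idx r)) :
    phimap k t S (Pprod k A) = C (Eprod k S A) * monomial (Imap t S A) 1 := by
  induction A using Multiset.induction with
  | empty => simp [Pprod, Eprod, Imap]
  | cons a A ih =>
    rw [Pprod_cons, map_mul, ih, Eprod_cons, Imap_cons]
    have : phimap k t S (X a) = C (vsgn k S a) * monomial (wfn t S a) 1 := by
      unfold phimap; rw [aeval_X]
    rw [this, map_mul]
    rw [mul_mul_mul_comm, monomial_mul, mul_one]

lemma psimap_Pprod_mem {A : Multiset (Idx r)} (hA : ∀ x ∈ A, x ∈ S) :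
    psimap k t S (Pprod k A) = C (Eprod k S A) * monomial (Imap t S A) 1 := by
  induction A using Multiset.induction with
  | empty => simp [Pprod, Eprod, Imap]
  | cons a A ih =>
    rw [Pprod_cons, map_mul, ih (fun x hx => hA x (Multiset.mem_cons_of_mem hx)),
      Eprod_cons, Imap_cons]
    have : psimap k t S (X a) = C (vsgn k S a) * monomial (wfn t S a) 1 := by
      unfold psimap; rw [aeval_X, if_pos (hA a (Multiset.mem_cons_self a A))]
    rw [this, map_mul]
    rw [mul_mul_mul_comm, monomial_mul, mul_one]

lemma Pprod_toM (u : (Idx r) →₀ ℕ) :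
    Pprod k u.toMultiset = (monomial u (1 : k) : MvPolynomial (Idx r) k) := by
  induction u using Finsupp.induction with
  | zero => simp [Pprod]
  | single_add a b f haf hb ih =>
    rw [Finsupp.toMultiset_add, Finsupp.toMultiset_single]
    unfold Pprod
    rw [Multiset.map_add, Multiset.prod_add, Multiset.nsmul_singleton,
      Multiset.map_replicate, Multiset.prod_replicate, monomial_single_add]
    unfold Pprod at ih
    rw [ih]

lemma mem_toM_mem {u : (Idx r) →₀ ℕ} (h : ∀ a ∈ u.support, a ∈ S) :
    ∀ x ∈ u.toMultiset, x ∈ S := by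
  intro x hx
  exact h x (by rwa [Finsupp.mem_toMultiset] at hx)

/-- general straightening: mixed multisets -/
lemma straighten_gen (hS : Signed t S) (A B : Multiset (Idx r))
    (hI : Imap t S A = Imap t S B) :
    C (Eprod k S A) * Pprod k A - C (Eprod k S B) * Pprod k B ∈ Jtilde k t S := by
  classical
  have hsplit : ∀ M : Multiset (Idx r), M.filter (· ∈ S) + M.filter (¬ · ∈ S) = M :=
    fun M => Multiset.filter_add_not _ M
  have hcount : ∀ (M : Multiset (Idx r)) (c : Idx r),
      Imap t S M (Sum.inl c) = Multiset.count c (M.filter (¬ · ∈ S)) := by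
    intro M c
    rw [Imap_apply]
    induction M using Multiset.induction with
    | empty => simp
    | cons x M ih =>
      rw [Multiset.map_cons, Multiset.sum_cons, ih, Multiset.filter_cons]
      rw [wfn_apply_inl]
      by_cases hx : x ∈ S
      · simp [hx]
      · by_cases hxc : x = c
        · subst hxc
          simp only [hx, not_false_iff, and_self, if_pos, true_and,
            Multiset.count_cons_self, if_neg, not_true]
          simp [hx]
          omega
        · have hcc : c ≠ x := fun h => hxc h.symm
          simp [hx, hxc, Multiset.count_cons_of_ne hcc]
  have hout : A.filter (¬ · ∈ S) = B.filter (¬ · ∈ S) := by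
    ext c
    rw [← hcount A c, ← hcount B c, hI]
  have hIadd : ∀ M₁ M₂ : Multiset (Idx r),
      Imap t S (M₁ + M₂) = Imap t S M₁ + Imap t S M₂ := by
    intro M₁ M₂
    unfold Imap
    rw [Multiset.map_add, Multiset.sum_add]
  have hIin : Imap t S (A.filter (· ∈ S)) = Imap t S (B.filter (· ∈ S)) := by
    have hA := hIadd (A.filter (· ∈ S)) (A.filter (¬ · ∈ S))
    have hB := hIadd (B.filter (· ∈ S)) (B.filter (¬ · ∈ S))
    rw [hsplit] at hA hB
    have : Imap t S (A.filter (· ∈ S)) + Imap t S (A.filter (¬ · ∈ S)) =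
        Imap t S (B.filter (· ∈ S)) + Imap t S (B.filter (¬ · ∈ S)) := by
      rw [← hA, ← hB, hI]
    rw [hout] at this
    ext γ
    have := congrArg (fun f : WVar r →₀ ℕ => f γ) this
    simp only [Finsupp.add_apply] at this
    omega
  have hcore := straighten_core k hS (A.filter (· ∈ S)).card
    (A.filter (· ∈ S)) (B.filter (· ∈ S)) le_rfl
    (fun x hx => (Multiset.mem_filter.1 hx).2)
    (fun x hx => (Multiset.mem_filter.1 hx).2) hIin
  have hPE : ∀ M₁ M₂ : Multiset (Idx r),
      Pprod k (M₁ + M₂) = Pprod k M₁ * Pprod k M₂ ∧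
      Eprod k S (M₁ + M₂) = Eprod k S M₁ * Eprod k S M₂ := by
    intro M₁ M₂
    constructor
    · unfold Pprod; rw [Multiset.map_add, Multiset.prod_add]
    · unfold Eprod; rw [Multiset.map_add, Multiset.prod_add]
  have hkey : C (Eprod k S A) * Pprod k A - C (Eprod k S B) * Pprod k B =
      (C (Eprod k S (A.filter (¬ · ∈ S))) * Pprod k (A.filter (¬ · ∈ S))) *
        (C (Eprod k S (A.filter (· ∈ S))) * Pprod k (A.filter (· ∈ S)) -
         C (Eprod k S (B.filter (· ∈ S))) * Pprod k (B.filter (· ∈ S))) := by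
    conv_lhs => rw [← hsplit A, ← hsplit B]
    rw [hout]
    rw [(hPE _ _).1, (hPE _ _).2, (hPE _ _).1, (hPE _ _).2, map_mul, map_mul]
    ring
  rw [hkey]
  exact Ideal.mul_mem_left _ _ hcore

lemma phimap_monomial (u : (Idx r) →₀ ℕ) (c : k) :
    phimap k t S (monomial u c) =
      monomial (Imap t S u.toMultiset) (c * Eprod k S u.toMultiset) := by
  have h1 : (monomial u c : MvPolynomial (Idx r) k) = C c * monomial u 1 := by
    rw [C_mul_monomial, mul_one]
  rw [h1, map_mul, ← Pprod_toM, phimap_Pprod]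
  have h2 : phimap k t S (C c) = C c := by
    unfold phimap
    rw [aeval_C]
    rfl
  rw [h2, ← mul_assoc, ← map_mul, C_mul_monomial, mul_one]

lemma psimap_monomial_mem (u : (Idx r) →₀ ℕ) (c : k) (h : ∀ a ∈ u.support, a ∈ S) :
    psimap k t S (monomial u c) =
      monomial (Imap t S u.toMultiset) (c * Eprod k S u.toMultiset) := by
  have h1 : (monomial u c : MvPolynomial (Idx r) k) = C c * monomial u 1 := by
    rw [C_mul_monomial, mul_one]
  rw [h1, map_mul, ← Pprod_toM, psimap_Pprod_mem k (mem_toM_mem h)]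
  have h2 : psimap k t S (C c) = C c := by
    unfold psimap
    rw [aeval_C]
    rfl
  rw [h2, ← mul_assoc, ← map_mul, C_mul_monomial, mul_one]

lemma psimap_monomial_not (u : (Idx r) →₀ ℕ) (c : k) (h : ¬ ∀ a ∈ u.support, a ∈ S) :
    psimap k t S (monomial u c) = 0 := by
  push_neg at h
  obtain ⟨a, ha, haS⟩ := h
  have hmem : a ∈ u.toMultiset := (Finsupp.mem_toMultiset _ _).2 ha
  obtain ⟨M, hM⟩ : ∃ M, u.toMultiset = a ::ₘ M :=
    ⟨u.toMultiset.erase a, (Multiset.cons_erase hmem).symm⟩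
  have h1 : (monomial u c : MvPolynomial (Idx r) k) = C c * Pprod k u.toMultiset := by
    rw [Pprod_toM, C_mul_monomial, mul_one]
  rw [h1, map_mul, hM, Pprod_cons, map_mul]
  have h2 : psimap k t S (X a) = 0 := by
    unfold psimap
    rw [aeval_X, if_neg haS]
  rw [h2, zero_mul, mul_zero]

end Maps
section KerPhi

open Classical

variable {n : ℕ} {r : Fin n → ℕ} {S : Set (Idx r)} {t : ℕ}
variable (k : Type*) [Field k]

lemma neg_pow_sq (e : ℕ) : ((-1 : k) ^ e) * ((-1 : k) ^ e) = 1 := by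
  rw [← pow_add, ← two_mul, pow_mul, neg_one_sq, one_pow]

lemma phimap_hbin (hS : Signed t S) {a b : Idx r} (hab : Connected S a b) (i : Fin n)
    (hit : (i : ℕ) < t) (hne : a i ≠ b i) :
    phimap k t S (hbin k S {i} a b) = 0 := by
  have hX : ∀ x : Idx r, phimap k t S (X x) = C (vsgn k S x) * monomial (wfn t S x) 1 := by
    intro x; unfold phimap; rw [aeval_X]
  have hsw : wfn t S (sw {i} a b) + wfn t S (sw {i} b a) = wfn t S a + wfn t S b :=
    wfn_switch hS.1 hab i hit hne
  have hstar := star k hS hab i hit hne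
  unfold hbin
  rw [map_sub, map_mul, map_mul, map_mul, hX, hX, hX, hX]
  have hneg : phimap k t S ((-1 : MvPolynomial (Idx r) k) ^
      (({i} : Finset (Fin n)).card * (pl S a b - 1))) =
      C ((-1 : k) ^ (pl S a b - 1)) := by
    rw [map_pow, map_neg, map_one, Finset.card_singleton, one_mul, map_pow, map_neg, map_one]
  rw [hneg]
  rw [mul_mul_mul_comm, monomial_mul, mul_one, mul_mul_mul_comm, monomial_mul, mul_one,
    hsw, ← map_mul, ← map_mul, ← mul_assoc, ← map_mul, ← hstar]
  have hzz : (-1 : k) ^ (pl S a b - 1) *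
      (vsgn k S a * vsgn k S b * (-1 : k) ^ (pl S a b - 1)) = vsgn k S a * vsgn k S b := by
    linear_combination (vsgn k S a * vsgn k S b) * neg_pow_sq k (pl S a b - 1)
  rw [hzz, sub_self]

lemma psimap_hbin (hS : Signed t S) {a b : Idx r} (hab : Connected S a b) (i : Fin n)
    (hit : (i : ℕ) < t) (hne : a i ≠ b i) :
    psimap k t S (hbin k S {i} a b) = 0 := by
  have hsS : sw {i} a b ∈ S := switch_mem hS.1 a b hab i hit hne
  have hs'S : sw {i} b a ∈ S := switch_mem hS.1 b a hab.symm i hit (Ne.symm hne)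
  have hX : ∀ x : Idx r, x ∈ S →
      psimap k t S (X x) = C (vsgn k S x) * monomial (wfn t S x) 1 := by
    intro x hx; unfold psimap; rw [aeval_X, if_pos hx]
  have hsw : wfn t S (sw {i} a b) + wfn t S (sw {i} b a) = wfn t S a + wfn t S b :=
    wfn_switch hS.1 hab i hit hne
  have hstar := star k hS hab i hit hne
  unfold hbin
  rw [map_sub, map_mul, map_mul, map_mul, hX a hab.mem_left, hX b hab.mem_right,
    hX _ hsS, hX _ hs'S]
  have hneg : psimap k t S ((-1 : MvPolynomial (Idx r) k) ^
      (({i} : Finset (Fin n)).card * (pl S a b - 1))) =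
      C ((-1 : k) ^ (pl S a b - 1)) := by
    rw [map_pow, map_neg, map_one, Finset.card_singleton, one_mul, map_pow, map_neg, map_one]
  rw [hneg]
  rw [mul_mul_mul_comm, monomial_mul, mul_one, mul_mul_mul_comm, monomial_mul, mul_one,
    hsw, ← map_mul, ← map_mul, ← mul_assoc, ← map_mul, ← hstar]
  have hzz : (-1 : k) ^ (pl S a b - 1) *
      (vsgn k S a * vsgn k S b * (-1 : k) ^ (pl S a b - 1)) = vsgn k S a * vsgn k S b := by
    linear_combination (vsgn k S a * vsgn k S b) * neg_pow_sq k (pl S a b - 1)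
  rw [hzz, sub_self]

lemma support_sum_monomial_subset (s : Finset ((Idx r) →₀ ℕ)) (c : ((Idx r) →₀ ℕ) → k) :
    (∑ u ∈ s, (monomial u (c u) : MvPolynomial (Idx r) k)).support ⊆ s := by
  induction s using Finset.induction with
  | empty => simp
  | insert a s' hx ih =>
    rw [Finset.sum_insert hx]
    refine (MvPolynomial.support_add).trans ?_
    intro v hv
    rcases Finset.mem_union.1 hv with hv | hv
    · have := MvPolynomial.support_monomial_subset hv
      simp only [Finset.mem_singleton] at this
      subst this
      exact Finset.mem_insert_self _ _
    · exact Finset.mem_insert_of_mem (ih hv)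

/-- Kernel inclusion: everything killed by `φ` lies in `J̃`. -/
lemma mem_Jtilde_of_phimap (hS : Signed t S) :
    ∀ N : ℕ, ∀ f : MvPolynomial (Idx r) k, f.support.card ≤ N →
    phimap k t S f = 0 → f ∈ Jtilde k t S := by
  intro N
  induction N with
  | zero =>
    intro f hc h0
    have : f = 0 := by
      rw [← MvPolynomial.support_eq_empty, ← Finset.card_eq_zero]
      omega
    rw [this]
    exact Submodule.zero_mem _
  | succ N IH =>
    intro f hcard hf0
    by_cases hf : f = 0
    · rw [hf]; exact Submodule.zero_mem _
    obtain ⟨u₀, hu₀⟩ := Finset.nonempty_iff_ne_empty.2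
      (fun h => hf (MvPolynomial.support_eq_empty.1 h))
    have hu₀G : u₀ ∈ f.support.filter
        (fun u => Imap t S u.toMultiset = Imap t S u₀.toMultiset) := by
      simp [hu₀]
    -- the coefficient sum over the fiber vanishes
    have hφf : phimap k t S f = ∑ u ∈ f.support,
        monomial (Imap t S u.toMultiset) (coeff u f * Eprod k S u.toMultiset) := by
      conv_lhs => rw [f.as_sum]
      rw [map_sum]
      exact Finset.sum_congr rfl fun u _ => phimap_monomial k u (coeff u f)
    have hcoeff : ∑ u ∈ f.support.filter
        (fun u => Imap t S u.toMultiset = Imap t S u₀.toMultiset),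
        coeff u f * Eprod k S u.toMultiset = 0 := by
      have h2 := congrArg (coeff (Imap t S u₀.toMultiset)) hf0
      rw [hφf, MvPolynomial.coeff_sum, MvPolynomial.coeff_zero] at h2
      simp only [MvPolynomial.coeff_monomial] at h2
      rw [Finset.sum_filter]
      convert h2 using 2
      rename_i u hu
      by_cases hcond : Imap t S u.toMultiset = Imap t S u₀.toMultiset
      · rw [if_pos hcond, if_pos hcond]
      · rw [if_neg hcond, if_neg hcond]
    -- the fiber part lies in the ideal
    have hgJ : (∑ u ∈ f.support.filter
        (fun u => Imap t S u.toMultiset = Imap t S u₀.toMultiset),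
        (monomial u (coeff u f) : MvPolynomial (Idx r) k)) ∈ Jtilde k t S := by
      have hdecomp : (∑ u ∈ f.support.filter
          (fun u => Imap t S u.toMultiset = Imap t S u₀.toMultiset),
          (monomial u (coeff u f) : MvPolynomial (Idx r) k)) =
          (∑ u ∈ f.support.filter
            (fun u => Imap t S u.toMultiset = Imap t S u₀.toMultiset),
            C (coeff u f * Eprod k S u.toMultiset) *
              (C (Eprod k S u.toMultiset) * Pprod k u.toMultiset -
               C (Eprod k S u₀.toMultiset) * Pprod k u₀.toMultiset)) +
          C (∑ u ∈ f.support.filter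
            (fun u => Imap t S u.toMultiset = Imap t S u₀.toMultiset),
            coeff u f * Eprod k S u.toMultiset) *
            (C (Eprod k S u₀.toMultiset) * Pprod k u₀.toMultiset) := by
        rw [map_sum, Finset.sum_mul, ← Finset.sum_add_distrib]
        apply Finset.sum_congr rfl
        intro u _
        have hEsq := Eprod_sq k (S := S) u.toMultiset
        have hmon : (monomial u (coeff u f) : MvPolynomial (Idx r) k) =
            C (coeff u f) * Pprod k u.toMultiset := by
          rw [Pprod_toM, C_mul_monomial, mul_one]
        have hc2 : (C (coeff u f * Eprod k S u.toMultiset) : MvPolynomial (Idx r) k) *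
            C (Eprod k S u.toMultiset) = C (coeff u f) := by
          rw [← map_mul, mul_assoc, hEsq, mul_one]
        rw [hmon]
        linear_combination (-(Pprod k u.toMultiset)) * hc2
      rw [hdecomp, hcoeff, map_zero, zero_mul, add_zero]
      apply Ideal.sum_mem
      intro u hu
      apply Ideal.mul_mem_left
      exact straighten_gen k hS _ _ (Finset.mem_filter.1 hu).2
    -- image of fiber part is zero
    have hφg : phimap k t S (∑ u ∈ f.support.filter
        (fun u => Imap t S u.toMultiset = Imap t S u₀.toMultiset),
        (monomial u (coeff u f) : MvPolynomial (Idx r) k)) = 0 := by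
      rw [map_sum]
      have he : ∀ u ∈ f.support.filter
          (fun u => Imap t S u.toMultiset = Imap t S u₀.toMultiset),
          phimap k t S (monomial u (coeff u f)) =
          monomial (Imap t S u₀.toMultiset) (coeff u f * Eprod k S u.toMultiset) := by
        intro u hu
        rw [phimap_monomial, (Finset.mem_filter.1 hu).2]
      rw [Finset.sum_congr rfl he, ← map_sum (monomial (Imap t S u₀.toMultiset)), hcoeff,
        map_zero]
    -- split and recurse
    have hsplit : f = (∑ u ∈ f.support.filter
        (fun u => Imap t S u.toMultiset = Imap t S u₀.toMultiset),
        (monomial u (coeff u f) : MvPolynomial (Idx r) k)) +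
        (∑ u ∈ f.support.filter
          (fun u => ¬ Imap t S u.toMultiset = Imap t S u₀.toMultiset),
          (monomial u (coeff u f) : MvPolynomial (Idx r) k)) := by
      conv_lhs => rw [f.as_sum]
      exact (Finset.sum_filter_add_sum_filter_not _ _ _).symm
    have hφh : phimap k t S (∑ u ∈ f.support.filter
        (fun u => ¬ Imap t S u.toMultiset = Imap t S u₀.toMultiset),
        (monomial u (coeff u f) : MvPolynomial (Idx r) k)) = 0 := by
      have := congrArg (phimap k t S) hsplit
      rw [hf0, map_add, hφg, zero_add] at this
      exact this.symm
    have hhcard : (∑ u ∈ f.support.filter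
        (fun u => ¬ Imap t S u.toMultiset = Imap t S u₀.toMultiset),
        (monomial u (coeff u f) : MvPolynomial (Idx r) k)).support.card ≤ N := by
      have h1 := Finset.card_le_card (support_sum_monomial_subset k
        (f.support.filter
          (fun u => ¬ Imap t S u.toMultiset = Imap t S u₀.toMultiset))
        (fun u => coeff u f))
      have h2 := Finset.card_filter_add_card_filter_not
        (s := f.support) (p := fun u => Imap t S u.toMultiset = Imap t S u₀.toMultiset)
      have h3 : 0 < (f.support.filter
          (fun u => Imap t S u.toMultiset = Imap t S u₀.toMultiset)).card :=
        Finset.card_pos.2 ⟨u₀, hu₀G⟩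
      omega
    have hhJ := IH _ hhcard hφh
    rw [hsplit]
    exact Ideal.add_mem _ hgJ hhJ

end KerPhi
section KerPsi

open Classical

variable {n : ℕ} {r : Fin n → ℕ} {S : Set (Idx r)} {t : ℕ}
variable (k : Type*) [Field k]

lemma Jtilde_le_Qideal : Jtilde k t S ≤ Qideal k t S := by
  rw [Qideal, Submodule.add_eq_sup]
  exact le_sup_right

lemma Var_le_Qideal : VarIdeal k S ≤ Qideal k t S := by
  rw [Qideal, Submodule.add_eq_sup]
  exact le_sup_left

lemma monomial_mem_Var {u : (Idx r) →₀ ℕ} (c : k) (h : ¬ ∀ a ∈ u.support, a ∈ S) :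
    (monomial u c : MvPolynomial (Idx r) k) ∈ VarIdeal k S := by
  push_neg at h
  obtain ⟨a, haSup, haS⟩ := h
  have hXa : (X a : MvPolynomial (Idx r) k) ∈ VarIdeal k S :=
    Ideal.subset_span ⟨a, haS, rfl⟩
  have hXdef : (X a : MvPolynomial (Idx r) k) = monomial (Finsupp.single a 1) 1 := rfl
  have he : (u - Finsupp.single a 1) + Finsupp.single a 1 = u := by
    ext x
    rw [Finsupp.add_apply, Finsupp.tsub_apply]
    by_cases hx : x = a
    · subst hx
      rw [Finsupp.single_eq_same]
      have : u x ≠ 0 := Finsupp.mem_support_iff.1 haSup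
      omega
    · rw [Finsupp.single_eq_of_ne' (fun hc => hx hc.symm)]
      omega
  have hdec : (monomial u c : MvPolynomial (Idx r) k) =
      monomial (u - Finsupp.single a 1) c * X a := by
    rw [hXdef, monomial_mul, mul_one, he]
  rw [hdec]
  exact Ideal.mul_mem_left _ _ hXa

/-- Kernel inclusion: everything killed by `ψ` lies in `Q`. -/
lemma mem_Qideal_of_psimap (hS : Signed t S) :
    ∀ N : ℕ, ∀ f : MvPolynomial (Idx r) k, f.support.card ≤ N →
    psimap k t S f = 0 → f ∈ Qideal k t S := by
  intro N
  induction N with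
  | zero =>
    intro f hc h0
    have : f = 0 := by
      rw [← MvPolynomial.support_eq_empty, ← Finset.card_eq_zero]
      omega
    rw [this]
    exact Submodule.zero_mem _
  | succ N IH =>
    intro f hcard hf0
    by_cases hf : f = 0
    · rw [hf]; exact Submodule.zero_mem _
    obtain ⟨u₀, hu₀⟩ := Finset.nonempty_iff_ne_empty.2
      (fun h => hf (MvPolynomial.support_eq_empty.1 h))
    by_cases hin : ∀ a ∈ u₀.support, a ∈ S
    · -- fiber argument
      have hu₀G : u₀ ∈ f.support.filter (fun u => (∀ a ∈ u.support, a ∈ S) ∧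
          Imap t S u.toMultiset = Imap t S u₀.toMultiset) := by
        exact Finset.mem_filter.2 ⟨hu₀, hin, rfl⟩
      have hψf : psimap k t S f = ∑ u ∈ f.support,
          psimap k t S (monomial u (coeff u f)) := by
        conv_lhs => rw [f.as_sum]
        rw [map_sum]
      have h3 : ∀ u ∈ f.support, coeff (Imap t S u₀.toMultiset)
          (psimap k t S (monomial u (coeff u f))) =
          if (∀ a ∈ u.support, a ∈ S) ∧
              Imap t S u.toMultiset = Imap t S u₀.toMultiset then
            coeff u f * Eprod k S u.toMultiset
          else 0 := by
        intro u _
        by_cases h : ∀ a ∈ u.support, a ∈ S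
        · rw [psimap_monomial_mem k u _ h, MvPolynomial.coeff_monomial]
          by_cases hI : Imap t S u.toMultiset = Imap t S u₀.toMultiset
          · rw [if_pos hI, if_pos ⟨h, hI⟩]
          · rw [if_neg hI, if_neg (fun hc => hI hc.2)]
        · rw [psimap_monomial_not k u _ h, MvPolynomial.coeff_zero,
            if_neg (fun hc => h hc.1)]
      have h2 : ∑ u ∈ f.support, (if (∀ a ∈ u.support, a ∈ S) ∧
          Imap t S u.toMultiset = Imap t S u₀.toMultiset then
            coeff u f * Eprod k S u.toMultiset else 0) = 0 := by
        have hc := congrArg (coeff (Imap t S u₀.toMultiset)) hf0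
        rw [hψf, MvPolynomial.coeff_sum, MvPolynomial.coeff_zero] at hc
        exact Eq.trans (Finset.sum_congr rfl fun u hu => (h3 u hu).symm) hc
      have hcoeff : ∑ u ∈ f.support.filter (fun u => (∀ a ∈ u.support, a ∈ S) ∧
          Imap t S u.toMultiset = Imap t S u₀.toMultiset),
          coeff u f * Eprod k S u.toMultiset = 0 := by
        rw [Finset.sum_filter]
        convert h2 using 2
        rename_i u hu
        by_cases hcond : (∀ a ∈ u.support, a ∈ S) ∧
            Imap t S u.toMultiset = Imap t S u₀.toMultiset
        · rw [if_pos hcond, if_pos hcond]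
        · rw [if_neg hcond, if_neg hcond]
      have hgJ : (∑ u ∈ f.support.filter (fun u => (∀ a ∈ u.support, a ∈ S) ∧
          Imap t S u.toMultiset = Imap t S u₀.toMultiset),
          (monomial u (coeff u f) : MvPolynomial (Idx r) k)) ∈ Jtilde k t S := by
        have hdecomp : (∑ u ∈ f.support.filter (fun u => (∀ a ∈ u.support, a ∈ S) ∧
            Imap t S u.toMultiset = Imap t S u₀.toMultiset),
            (monomial u (coeff u f) : MvPolynomial (Idx r) k)) =
            (∑ u ∈ f.support.filter (fun u => (∀ a ∈ u.support, a ∈ S) ∧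
              Imap t S u.toMultiset = Imap t S u₀.toMultiset),
              C (coeff u f * Eprod k S u.toMultiset) *
                (C (Eprod k S u.toMultiset) * Pprod k u.toMultiset -
                 C (Eprod k S u₀.toMultiset) * Pprod k u₀.toMultiset)) +
            C (∑ u ∈ f.support.filter (fun u => (∀ a ∈ u.support, a ∈ S) ∧
              Imap t S u.toMultiset = Imap t S u₀.toMultiset),
              coeff u f * Eprod k S u.toMultiset) *
              (C (Eprod k S u₀.toMultiset) * Pprod k u₀.toMultiset) := by
          rw [map_sum, Finset.sum_mul, ← Finset.sum_add_distrib]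
          apply Finset.sum_congr rfl
          intro u _
          have hEsq := Eprod_sq k (S := S) u.toMultiset
          have hmon : (monomial u (coeff u f) : MvPolynomial (Idx r) k) =
              C (coeff u f) * Pprod k u.toMultiset := by
            rw [Pprod_toM, C_mul_monomial, mul_one]
          have hc2 : (C (coeff u f * Eprod k S u.toMultiset) : MvPolynomial (Idx r) k) *
              C (Eprod k S u.toMultiset) = C (coeff u f) := by
            rw [← map_mul, mul_assoc, hEsq, mul_one]
          rw [hmon]
          linear_combination (-(Pprod k u.toMultiset)) * hc2
        rw [hdecomp, hcoeff, map_zero, zero_mul, add_zero]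
        apply Ideal.sum_mem
        intro u hu
        apply Ideal.mul_mem_left
        exact straighten_gen k hS _ _ (Finset.mem_filter.1 hu).2.2
      have hψg : psimap k t S (∑ u ∈ f.support.filter
          (fun u => (∀ a ∈ u.support, a ∈ S) ∧
            Imap t S u.toMultiset = Imap t S u₀.toMultiset),
          (monomial u (coeff u f) : MvPolynomial (Idx r) k)) = 0 := by
        rw [map_sum]
        have he : ∀ u ∈ f.support.filter (fun u => (∀ a ∈ u.support, a ∈ S) ∧
            Imap t S u.toMultiset = Imap t S u₀.toMultiset),
            psimap k t S (monomial u (coeff u f)) =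
            monomial (Imap t S u₀.toMultiset) (coeff u f * Eprod k S u.toMultiset) := by
          intro u hu
          obtain ⟨-, h1, h2⟩ := Finset.mem_filter.1 hu
          rw [psimap_monomial_mem k u _ h1, h2]
        rw [Finset.sum_congr rfl he, ← map_sum (monomial (Imap t S u₀.toMultiset)),
          hcoeff, map_zero]
      have hsplit : f = (∑ u ∈ f.support.filter
          (fun u => (∀ a ∈ u.support, a ∈ S) ∧
            Imap t S u.toMultiset = Imap t S u₀.toMultiset),
          (monomial u (coeff u f) : MvPolynomial (Idx r) k)) +
          (∑ u ∈ f.support.filter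
            (fun u => ¬ ((∀ a ∈ u.support, a ∈ S) ∧
              Imap t S u.toMultiset = Imap t S u₀.toMultiset)),
            (monomial u (coeff u f) : MvPolynomial (Idx r) k)) := by
        conv_lhs => rw [f.as_sum]
        exact (Finset.sum_filter_add_sum_filter_not _ _ _).symm
      have hψh : psimap k t S (∑ u ∈ f.support.filter
          (fun u => ¬ ((∀ a ∈ u.support, a ∈ S) ∧
            Imap t S u.toMultiset = Imap t S u₀.toMultiset)),
          (monomial u (coeff u f) : MvPolynomial (Idx r) k)) = 0 := by
        have := congrArg (psimap k t S) hsplit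
        rw [hf0, map_add, hψg, zero_add] at this
        exact this.symm
      have hhcard : (∑ u ∈ f.support.filter
          (fun u => ¬ ((∀ a ∈ u.support, a ∈ S) ∧
            Imap t S u.toMultiset = Imap t S u₀.toMultiset)),
          (monomial u (coeff u f) : MvPolynomial (Idx r) k)).support.card ≤ N := by
        have h1 := Finset.card_le_card (support_sum_monomial_subset k
          (f.support.filter (fun u => ¬ ((∀ a ∈ u.support, a ∈ S) ∧
            Imap t S u.toMultiset = Imap t S u₀.toMultiset)))
          (fun u => coeff u f))
        have h2 := Finset.card_filter_add_card_filter_not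
          (s := f.support) (p := fun u => (∀ a ∈ u.support, a ∈ S) ∧
            Imap t S u.toMultiset = Imap t S u₀.toMultiset)
        have h3 : 0 < (f.support.filter (fun u => (∀ a ∈ u.support, a ∈ S) ∧
            Imap t S u.toMultiset = Imap t S u₀.toMultiset)).card :=
          Finset.card_pos.2 ⟨u₀, hu₀G⟩
        omega
      have hhQ := IH _ hhcard hψh
      rw [hsplit]
      exact Ideal.add_mem _ (Jtilde_le_Qideal k hgJ) hhQ
    · -- leading monomial involves a variable outside S
      have hvar : (monomial u₀ (coeff u₀ f) : MvPolynomial (Idx r) k) ∈ VarIdeal k S :=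
        monomial_mem_Var k _ hin
      have hψm : psimap k t S (monomial u₀ (coeff u₀ f)) = 0 :=
        psimap_monomial_not k u₀ _ hin
      have hsupp' : (f - monomial u₀ (coeff u₀ f)).support ⊆ f.support.erase u₀ := by
        intro v hv
        rw [MvPolynomial.mem_support_iff] at hv
        rw [MvPolynomial.coeff_sub, MvPolynomial.coeff_monomial] at hv
        by_cases hvu : u₀ = v
        · subst hvu
          rw [if_pos rfl] at hv
          simp at hv
        · rw [if_neg hvu, sub_zero] at hv
          exact Finset.mem_erase.2 ⟨fun hc => hvu hc.symm, MvPolynomial.mem_support_iff.2 hv⟩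
      have hcard' : (f - monomial u₀ (coeff u₀ f)).support.card ≤ N := by
        have h1 := Finset.card_le_card hsupp'
        have h2 := Finset.card_erase_of_mem hu₀
        omega
      have hψf' : psimap k t S (f - monomial u₀ (coeff u₀ f)) = 0 := by
        rw [map_sub, hf0, hψm, sub_zero]
      have hf'Q := IH _ hcard' hψf'
      have : f = (f - monomial u₀ (coeff u₀ f)) + monomial u₀ (coeff u₀ f) := by ring
      rw [this]
      exact Ideal.add_mem _ hf'Q (Var_le_Qideal k hvar)

end KerPsi
/-- `J̃^⟨t⟩_S` and `Q^⟨t⟩_S` are prime for `t`-signed `S`. -/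
theorem stmt14 (h2 : (2 : k) ≠ 0) (t : ℕ) (S : Set (Idx r)) (hS : Signed t S) :
    (Jtilde k t S).IsPrime ∧ (Qideal k t S).IsPrime := by
  constructor
  · have hker : Jtilde k t S = RingHom.ker (phimap k t S) := by
      apply le_antisymm
      · rw [Jtilde, Ideal.span_le]
        rintro p ⟨a, b, i, hconn, hit, hne, rfl⟩
        exact RingHom.mem_ker.2 (phimap_hbin k hS hconn i hit hne)
      · intro f hf
        exact mem_Jtilde_of_phimap k hS f.support.card f le_rfl (RingHom.mem_ker.1 hf)
    rw [hker]
    exact RingHom.ker_isPrime _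
  · have hker : Qideal k t S = RingHom.ker (psimap k t S) := by
      apply le_antisymm
      · rw [Qideal, Submodule.add_eq_sup]
        apply sup_le
        · rw [VarIdeal, Ideal.span_le]
          rintro p ⟨a, haS, rfl⟩
          refine RingHom.mem_ker.2 ?_
          show psimap k t S (X a) = 0
          unfold psimap
          rw [aeval_X, if_neg haS]
        · rw [Jtilde, Ideal.span_le]
          rintro p ⟨a, b, i, hconn, hit, hne, rfl⟩
          exact RingHom.mem_ker.2 (psimap_hbin k hS hconn i hit hne)
      · intro f hf
        exact mem_Qideal_of_psimap k hS f.support.card f le_rfl (RingHom.mem_ker.1 hf)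
    rw [hker]
    exact RingHom.ker_isPrime _
end

section
/- The ideal Ĵ^{⟨t⟩}, generated by the permanents g_{i,a,b} with d(a,b) = d_t(a,b) = 3 and i ∈ D_t(a,b), equals the ideal generated by the square-free monomials x_a x_b with d(a,b) = d_t(a,b) = 3; in particular Ĵ^{⟨t⟩} is a radical ideal. -/
open MvPolynomial Finset

variable {n : ℕ} {r : Fin n → ℕ}

variable (k : Type*) [Field k]

/-! ### Auxiliary lemmas for Statement 16 -/

lemma sw_ne_iff (K : Finset (Fin n)) (a b : Idx r) (x : Fin n) :
    sw K a b x ≠ sw K b a x ↔ a x ≠ b x := by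
  unfold sw; by_cases h : x ∈ K <;> simp [h, ne_comm]

lemma hdist_sw (K : Finset (Fin n)) (a b : Idx r) :
    hdist (sw K a b) (sw K b a) = hdist a b := by
  unfold hdist; congr 1
  apply Finset.filter_congr; intro x _; simp [sw_ne_iff]

lemma hdistT_sw (t : ℕ) (K : Finset (Fin n)) (a b : Idx r) :
    hdistT t (sw K a b) (sw K b a) = hdistT t a b := by
  unfold hdistT; congr 1
  apply Finset.filter_congr; intro x _; simp [sw_ne_iff]

lemma sw_sw_eq (a b : Idx r) {i j l : Fin n} (hij : i ≠ j) (hil : i ≠ l) (hjl : j ≠ l)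
    (hD : ∀ x, a x ≠ b x → x = i ∨ x = j ∨ x = l) :
    sw {l} (sw {i} a b) (sw {i} b a) = sw {j} b a := by
  funext x
  by_cases hxl : x = l
  · subst hxl; simp [sw, Ne.symm hil, Ne.symm hjl]
  · by_cases hxi : x = i
    · subst hxi; simp [sw, hil, hij]
    · by_cases hxj : x = j
      · subst hxj; simp [sw, hjl, Ne.symm hij]
      · have hab : a x = b x := by
          by_contra h
          rcases hD x h with h' | h' | h' <;> [exact hxi h'; exact hxj h'; exact hxl h']
        simp [sw, hxl, hxi, hxj, hab]

/-- The substitution killing the variables in `C`. -/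
noncomputable def phiC (C : Set (Idx r)) : MvPolynomial (Idx r) k →+* MvPolynomial (Idx r) k :=
  letI := Classical.dec
  (aeval fun a => if a ∈ C then 0 else X a).toRingHom

lemma phiC_X (C : Set (Idx r)) (a : Idx r) :
    phiC k C (X a) = (letI := Classical.dec; if a ∈ C then 0 else X a) := by
  simp [phiC]

lemma sub_phiC_mem (C : Set (Idx r)) (p : MvPolynomial (Idx r) k) :
    p - phiC k C p ∈ Ideal.span (X '' C : Set (MvPolynomial (Idx r) k)) := by
  induction p using MvPolynomial.induction_on with
  | C c => simp [phiC]
  | add p q hp hq =>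
      rw [map_add]
      have : p + q - (phiC k C p + phiC k C q) = (p - phiC k C p) + (q - phiC k C q) := by ring
      rw [this]; exact Ideal.add_mem _ hp hq
  | mul_X p a hp =>
      rw [map_mul]
      have hXa : X a - phiC k C (X a) ∈ Ideal.span (X '' C : Set (MvPolynomial (Idx r) k)) := by
        by_cases h : a ∈ C
        · rw [phiC_X]; simp only [if_pos h, sub_zero]
          exact Ideal.subset_span ⟨a, h, rfl⟩
        · rw [phiC_X]; simp only [if_neg h, sub_self]; exact Ideal.zero_mem _
      have key : p * X a - phiC k C p * phiC k C (X a) =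
          (p - phiC k C p) * X a + phiC k C p * (X a - phiC k C (X a)) := by ring
      rw [key]
      exact Ideal.add_mem _ (Ideal.mul_mem_right _ _ hp) (Ideal.mul_mem_left _ _ hXa)

lemma span_X_eq_ker (C : Set (Idx r)) :
    Ideal.span (X '' C : Set (MvPolynomial (Idx r) k)) = RingHom.ker (phiC k C) := by
  apply le_antisymm
  · rw [Ideal.span_le]
    rintro _ ⟨a, ha, rfl⟩
    simp only [SetLike.mem_coe, RingHom.mem_ker, phiC_X, if_pos ha]
  · intro p hp
    have h := sub_phiC_mem k C p
    rw [RingHom.mem_ker] at hp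
    rwa [hp, sub_zero] at h

lemma span_X_isPrime (C : Set (Idx r)) :
    (Ideal.span (X '' C : Set (MvPolynomial (Idx r) k))).IsPrime := by
  rw [span_X_eq_ker]; exact RingHom.ker_isPrime _

lemma X_mul_X_eq_monomial (a b : Idx r) :
    (X a * X b : MvPolynomial (Idx r) k) =
      monomial (Finsupp.single a 1 + Finsupp.single b 1) 1 := by
  rw [monomial_single_add, pow_one]; rfl

/-- `Ĵ^⟨t⟩` equals the indicated square-free monomial ideal and is radical. -/
theorem stmt16 (h2 : (2 : k) ≠ 0) (t : ℕ) :
    Jhat k t = Ideal.span {p : MvPolynomial (Idx r) k |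
        ∃ a b : Idx r, hdist a b = 3 ∧ hdistT t a b = 3 ∧ p = X a * X b} ∧
    (Jhat k t : Ideal (MvPolynomial (Idx r) k)).IsRadical := by
  have hset : {p : MvPolynomial (Idx r) k |
      ∃ a b : Idx r, hdist a b = 3 ∧ hdistT t a b = 3 ∧ p = X a * X b} =
      (fun s => monomial s (1 : k)) '' {u : Idx r →₀ ℕ |
        ∃ a b : Idx r, hdist a b = 3 ∧ hdistT t a b = 3 ∧
          u = Finsupp.single a 1 + Finsupp.single b 1} := by
    ext p
    constructor
    · rintro ⟨a, b, h3, h3t, rfl⟩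
      exact ⟨_, ⟨a, b, h3, h3t, rfl⟩, (X_mul_X_eq_monomial k a b).symm⟩
    · rintro ⟨_, ⟨a, b, h3, h3t, rfl⟩, rfl⟩
      exact ⟨a, b, h3, h3t, (X_mul_X_eq_monomial k a b).symm⟩
  have heq : Jhat k t = Ideal.span {p : MvPolynomial (Idx r) k |
      ∃ a b : Idx r, hdist a b = 3 ∧ hdistT t a b = 3 ∧ p = X a * X b} := by
    apply le_antisymm
    · rw [Jhat, Ideal.span_le]
      rintro p ⟨a, b, i, h3, h3t, _, _, rfl⟩
      rw [gperm]
      exact Ideal.add_mem _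
        (Ideal.subset_span ⟨a, b, h3, h3t, rfl⟩)
        (Ideal.subset_span ⟨sw {i} a b, sw {i} b a,
          by rw [hdist_sw]; exact h3, by rw [hdistT_sw]; exact h3t, rfl⟩)
    · rw [Ideal.span_le]
      rintro p ⟨a, b, h3, h3t, rfl⟩
      have hcard : (univ.filter fun x : Fin n => (x : ℕ) < t ∧ a x ≠ b x).card = 3 := h3t
      obtain ⟨i, j, l, hij, hil, hjl, hD3⟩ := Finset.card_eq_three.mp hcard
      have hmemD : ∀ x : Fin n, x ∈ ({i, j, l} : Finset (Fin n)) → (x : ℕ) < t ∧ a x ≠ b x := by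
        intro x hx
        rw [← hD3] at hx
        exact (Finset.mem_filter.mp hx).2
      obtain ⟨hit, habi⟩ := hmemD i (by simp)
      obtain ⟨hjt, habj⟩ := hmemD j (by simp)
      obtain ⟨hlt, habl⟩ := hmemD l (by simp)
      have hDall : ∀ x, a x ≠ b x → x = i ∨ x = j ∨ x = l := by
        intro x hx
        have hsub : (univ.filter fun x : Fin n => (x : ℕ) < t ∧ a x ≠ b x) ⊆
            (univ.filter fun x : Fin n => a x ≠ b x) := by
          intro y hy
          simp only [Finset.mem_filter] at *
          exact ⟨hy.1, hy.2.2⟩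
        have hFeq : (univ.filter fun x : Fin n => a x ≠ b x) =
            (univ.filter fun x : Fin n => (x : ℕ) < t ∧ a x ≠ b x) := by
          apply (Finset.eq_of_subset_of_card_le hsub _).symm
          rw [hcard]; exact le_of_eq h3
        have hxF : x ∈ (univ.filter fun x : Fin n => a x ≠ b x) :=
          Finset.mem_filter.mpr ⟨Finset.mem_univ x, hx⟩
        rw [hFeq, hD3] at hxF
        simpa using hxF
      have e1 : sw {l} (sw {i} a b) (sw {i} b a) = sw {j} b a :=
        sw_sw_eq a b hij hil hjl hDall
      have e2 : sw {l} (sw {i} b a) (sw {i} a b) = sw {j} a b :=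
        sw_sw_eq b a hij hil hjl (fun x hx => hDall x (Ne.symm hx))
      have key : gperm k i a b + gperm k j a b - gperm k l (sw {i} a b) (sw {i} b a) =
          2 * (X a * X b) := by
        simp only [gperm, e1, e2]; ring
      have g1 : gperm k i a b ∈ Jhat k t :=
        Ideal.subset_span ⟨a, b, i, h3, h3t, hit, habi, rfl⟩
      have g2 : gperm k j a b ∈ Jhat k t :=
        Ideal.subset_span ⟨a, b, j, h3, h3t, hjt, habj, rfl⟩
      have g3 : gperm k l (sw {i} a b) (sw {i} b a) ∈ Jhat k t :=
        Ideal.subset_span ⟨sw {i} a b, sw {i} b a, l,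
          by rw [hdist_sw]; exact h3, by rw [hdistT_sw]; exact h3t, hlt,
          (sw_ne_iff _ _ _ _).mpr habl, rfl⟩
      have hmem : 2 * (X a * X b) ∈ Jhat k t := by
        rw [← key]; exact sub_mem (add_mem g1 g2) g3
      have h2' : (X a * X b : MvPolynomial (Idx r) k) = C (2⁻¹ : k) * (2 * (X a * X b)) := by
        rw [← mul_assoc]
        have h2C : (2 : MvPolynomial (Idx r) k) = C (2 : k) := by
          rw [map_ofNat]
        rw [h2C, ← C_mul, inv_mul_cancel₀ h2, C_1, one_mul]
      rw [h2']
      exact Ideal.mul_mem_left _ _ hmem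
  refine ⟨heq, ?_⟩
  rw [heq]
  intro x hx
  obtain ⟨m, hm⟩ := Ideal.mem_radical_iff.mp hx
  rw [hset, mem_ideal_span_monomial_image]
  intro μ hμ
  by_contra hcon
  push_neg at hcon
  set CC : Set (Idx r) := {a | μ a = 0} with hCC
  have hcov : Ideal.span {p : MvPolynomial (Idx r) k |
      ∃ a b : Idx r, hdist a b = 3 ∧ hdistT t a b = 3 ∧ p = X a * X b} ≤
      Ideal.span (X '' CC : Set (MvPolynomial (Idx r) k)) := by
    rw [Ideal.span_le]
    rintro p ⟨a, b, h3, h3t, rfl⟩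
    by_cases ha : μ a = 0
    · exact Ideal.mul_mem_right _ _ (Ideal.subset_span ⟨a, ha, rfl⟩)
    by_cases hb : μ b = 0
    · exact Ideal.mul_mem_left _ _ (Ideal.subset_span ⟨b, hb, rfl⟩)
    exfalso
    refine hcon (Finsupp.single a 1 + Finsupp.single b 1) ⟨a, b, h3, h3t, rfl⟩ ?_
    have hab : a ≠ b := by
      rintro rfl
      rw [hdist] at h3
      simp at h3
    have ha1 : 1 ≤ μ a := Nat.one_le_iff_ne_zero.mpr ha
    have hb1 : 1 ≤ μ b := Nat.one_le_iff_ne_zero.mpr hb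
    intro x
    simp only [Finsupp.add_apply, Finsupp.single_apply]
    rcases eq_or_ne a x with rfl | hxa
    · rw [if_pos rfl, if_neg (Ne.symm hab)]; omega
    · rw [if_neg hxa]
      rcases eq_or_ne b x with rfl | hxb
      · rw [if_pos rfl]; omega
      · rw [if_neg hxb]; omega
  have hprime := span_X_isPrime k CC
  have hx' : x ∈ Ideal.span (X '' CC : Set (MvPolynomial (Idx r) k)) :=
    hprime.mem_of_pow_mem m (hcov hm)
  rw [mem_ideal_span_X_image] at hx'
  obtain ⟨a, haC, hane⟩ := hx' μ hμ
  exact hane haC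
end
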